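/- Let π_1, π_2 be a regular system of parameters of R, let a_i, b_i ∈ ℤ and ξ_i ∈ R^× for i = 1,…,4, and set b := (π_1^{a_1} π_2^{b_1} ξ_1) ∧ (π_1^{a_2} π_2^{b_2} ξ_2) ∧ (π_1^{a_3} π_2^{b_3} ξ_3) ∧ (π_1^{a_4} π_2^{b_4} ξ_4) ∈ Λ^4 L^×. Then ∂_{ν̄_p}^{(3)}(∂_{ν_p}^{(4)}(b)) = 0 in Λ^2 k^× for all but finitely many height-one primes p of R with R/p regular, and the sum Σ_p ∂_{ν̄_p}^{(3)}(∂_{ν_p}^{(4)}(b)), taken over all height-one primes p of R with R/p regular, equals 0 in Λ^2 k^×. -/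

import Mathlib

set_option synthInstance.maxHeartbeats 400000
set_option maxHeartbeats 1000000


open scoped TensorProduct
open ExteriorAlgebra

noncomputable section ChowPrelim

universe u

/-- The ℚ-vector space `F^× ⊗ ℚ` attached to a field `F`. -/
abbrev UnitsQ (F : Type u) [Field F] : Type u := ℚ ⊗[ℤ] (Additive Fˣ)

/-- The canonical map `F → F^× ⊗ ℚ`, sending a nonzero `x` to `x ⊗ 1` and `0` to `0`. -/
noncomputable def mkQ {F : Type u} [Field F] (x : F) : UnitsQ F :=
  letI := Classical.dec (x = 0)
  if h : x = 0 then 0 else (1 : ℚ) ⊗ₜ[ℤ] (Additive.ofMul (Units.mk0 x h))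

/-- The wedge `x₁ ∧ ⋯ ∧ xₙ ∈ Λ^n (F^× ⊗ ℚ)` of a family of elements of `F`. -/
noncomputable def wedgeF {F : Type u} [Field F] (n : ℕ) (x : Fin n → F) :
    ⋀[ℚ]^n (UnitsQ F) :=
  ⟨ExteriorAlgebra.ιMulti ℚ n (fun i => mkQ (x i)),
    ExteriorAlgebra.ιMulti_range ℚ n ⟨_, rfl⟩⟩

/-- Wedge of an abstract family of vectors. -/
noncomputable def wedgeV {M : Type u} [AddCommGroup M] [Module ℚ M] (n : ℕ) (v : Fin n → M) :
    ⋀[ℚ]^n M :=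
  ⟨ExteriorAlgebra.ιMulti ℚ n v, ExteriorAlgebra.ιMulti_range ℚ n ⟨_, rfl⟩⟩

/-- The product `a ∧ v₁ ∧ ⋯ ∧ v_q : Λ^r M` of an element `a ∈ Λ^p M` with `q` further vectors,
where `p + q = r`. -/
noncomputable def wedgeMulC {M : Type u} [AddCommGroup M] [Module ℚ M] (p q r : ℕ)
    (h : p + q = r) (a : ⋀[ℚ]^p M) (v : Fin q → M) : ⋀[ℚ]^r M :=
  ⟨a.1 * (ExteriorAlgebra.ιMulti ℚ q v : ExteriorAlgebra ℚ M), by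
    subst h
    have hmem : (ExteriorAlgebra.ιMulti ℚ q v : ExteriorAlgebra ℚ M) ∈
        (LinearMap.range (ι ℚ : M →ₗ[ℚ] ExteriorAlgebra ℚ M)) ^ q :=
      ExteriorAlgebra.ιMulti_range ℚ q ⟨_, rfl⟩
    have h2 := Submodule.mul_mem_mul a.2 hmem
    rw [← pow_add] at h2
    exact h2⟩

/-- The functorial map `Λ^n M → Λ^n N` induced by a linear map. -/
noncomputable def powMap {M N : Type u} [AddCommGroup M] [Module ℚ M]
    [AddCommGroup N] [Module ℚ N] (n : ℕ) (f : M →ₗ[ℚ] N) :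
    ⋀[ℚ]^n M →ₗ[ℚ] ⋀[ℚ]^n N :=
  (ExteriorAlgebra.map f).toLinearMap.restrict (p := ⋀[ℚ]^n M) (q := ⋀[ℚ]^n N)
    (by
      intro x hx
      have h : Submodule.map (ExteriorAlgebra.map f).toLinearMap (⋀[ℚ]^n M) ≤ ⋀[ℚ]^n N := by
        rw [← ExteriorAlgebra.ιMulti_span_fixedDegree, ← ExteriorAlgebra.ιMulti_span_fixedDegree,
          Submodule.map_span]
        refine Submodule.span_le.2 ?_
        rintro _ ⟨_, ⟨v, rfl⟩, rfl⟩
        exact Submodule.subset_span ⟨f ∘ v, (ExteriorAlgebra.map_apply_ιMulti f v).symm⟩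
      exact h ⟨x, hx, rfl⟩)

/-- The linear map `F^× ⊗ ℚ → K^× ⊗ ℚ` induced by a field embedding. -/
noncomputable def unitsQMap {F K : Type u} [Field F] [Field K] (j : F →+* K) :
    UnitsQ F →ₗ[ℚ] UnitsQ K :=
  LinearMap.baseChange ℚ
    ((MonoidHom.toAdditive (Units.map (j : F →* K))).toIntLinearMap)

section PreBloch

variable (F : Type u) [Field F]

/-- Auxiliary "difference" of two points of `P^1(F) = Option F` (`none` is `∞`),
used to define the cross-ratio. -/
def pdiff : Option F → Option F → F
  | some a, some b => a - b
  | _, _ => 1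

/-- The cross-ratio of four points of `P^1(F)`, as an element of `F`
(it lies in `F ∖ {0,1}` when the four points are distinct). -/
def crossRatio (x1 x2 x3 x4 : Option F) : F :=
  (pdiff F x1 x3 * pdiff F x2 x4) / (pdiff F x1 x4 * pdiff F x2 x3)

/-- The subspace of relations defining the pre-Bloch group: `{0}₂, {1}₂, {∞}₂` and the
five-term cross-ratio relations for five distinct points of `P^1(F)`. -/
def B2Rel : Submodule ℚ (Option F →₀ ℚ) :=
  Submodule.span ℚ
    ({Finsupp.single (some 0) 1, Finsupp.single (some 1) 1, Finsupp.single none 1} ∪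
      {r | ∃ x : Fin 5 → Option F, Function.Injective x ∧
        r = ∑ i : Fin 5, ((-1 : ℚ) ^ (i : ℕ)) •
          Finsupp.single (some (crossRatio F (x (i.succAbove 0)) (x (i.succAbove 1))
            (x (i.succAbove 2)) (x (i.succAbove 3)))) (1 : ℚ)})

/-- The pre-Bloch group `B₂(F)` (with ℚ-coefficients). -/
abbrev B2 : Type u := (Option F →₀ ℚ) ⧸ B2Rel F

/-- The generator `{x}₂` of the pre-Bloch group. -/
def B2.gen {F : Type u} [Field F] (x : F) : B2 F :=
  Submodule.Quotient.mk (Finsupp.single (some x) 1)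

end PreBloch

section Deltas

variable (F : Type u) [Field F]

/-- `d` is the differential `δ₂ : B₂(F) → Λ² F^×`, `{x}₂ ↦ x ∧ (1-x)`. -/
def IsDelta2 (d : B2 F →ₗ[ℚ] ⋀[ℚ]^2 (UnitsQ F)) : Prop :=
  ∀ x : F, x ≠ 0 → x ≠ 1 → d (B2.gen x) = wedgeF 2 ![x, 1 - x]

/-- `d` is the differential `δ₃ : B₂(F) ⊗ F^× → Λ³ F^×`, `{x}₂ ⊗ y ↦ x ∧ (1-x) ∧ y`. -/
def IsDelta3 (d : B2 F ⊗[ℚ] UnitsQ F →ₗ[ℚ] ⋀[ℚ]^3 (UnitsQ F)) : Prop :=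
  ∀ x y : F, x ≠ 0 → x ≠ 1 → y ≠ 0 →
    d (B2.gen x ⊗ₜ mkQ y) = wedgeF 3 ![x, 1 - x, y]

/-- `d` is the differential `δ₄ : B₂(F) ⊗ Λ² F^× → Λ⁴ F^×`,
`{x}₂ ⊗ (y ∧ z) ↦ x ∧ (1-x) ∧ y ∧ z`. -/
def IsDelta4 (d : B2 F ⊗[ℚ] (⋀[ℚ]^2 (UnitsQ F)) →ₗ[ℚ] ⋀[ℚ]^4 (UnitsQ F)) : Prop :=
  ∀ x y z : F, x ≠ 0 → x ≠ 1 → y ≠ 0 → z ≠ 0 →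
    d (B2.gen x ⊗ₜ wedgeF 2 ![y, z]) = wedgeF 4 ![x, 1 - x, y, z]

end Deltas

section Valuations

variable {F K : Type u} [Field F] [Field K]

/-- `ν` is (the additive form of) a discrete valuation on `F`:
a surjection onto `ℤ` defined on `F ∖ {0}`, multiplicative, and
satisfying the ultrametric inequality. -/
structure IsDVal (ν : F → ℤ) : Prop where
  map_mul : ∀ x y : F, x ≠ 0 → y ≠ 0 → ν (x * y) = ν x + ν y
  map_add : ∀ x y : F, x ≠ 0 → y ≠ 0 → x + y ≠ 0 → min (ν x) (ν y) ≤ ν (x + y)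
  surj : ∀ n : ℤ, ∃ x : F, x ≠ 0 ∧ ν x = n

/-- `res : F → K` realizes `K` as the residue field of the discrete valuation `ν`:
it is a surjective ring homomorphism on the valuation ring `O_ν` with kernel the
maximal ideal `m_ν` (and arbitrary elsewhere). -/
structure IsResidue (ν : F → ℤ) (res : F → K) : Prop where
  map_one : res 1 = 1
  map_add : ∀ x y : F, (x = 0 ∨ 0 ≤ ν x) → (y = 0 ∨ 0 ≤ ν y) →
    res (x + y) = res x + res y
  map_mul : ∀ x y : F, (x = 0 ∨ 0 ≤ ν x) → (y = 0 ∨ 0 ≤ ν y) →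
    res (x * y) = res x * res y
  zero_iff : ∀ x : F, (x = 0 ∨ 0 ≤ ν x) → (res x = 0 ↔ (x = 0 ∨ 0 < ν x))
  surj : ∀ z : K, ∃ x : F, (x = 0 ∨ 0 ≤ ν x) ∧ res x = z

/-- `D` is the tame symbol `∂_ν^{(n+1)} : Λ^{n+1} F^× → Λ^n K^×` attached to the discrete
valuation `ν` with residue field `K` (via `res`): it is characterized by
`∂(π ∧ u₂ ∧ ⋯ ∧ u_{n+1}) = ū₂ ∧ ⋯ ∧ ū_{n+1}` for a uniformizer `π` and units `uᵢ`. -/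
def IsTame (ν : F → ℤ) (res : F → K) (n : ℕ)
    (D : ⋀[ℚ]^(n + 1) (UnitsQ F) →ₗ[ℚ] ⋀[ℚ]^n (UnitsQ K)) : Prop :=
  ∀ (π : F) (u : Fin n → F), π ≠ 0 → ν π = 1 → (∀ i, u i ≠ 0 ∧ ν (u i) = 0) →
    D (wedgeF (n + 1) (Fin.cons π u)) = wedgeF n (fun i => res (u i))

/-- `D` is the tame symbol `∂_ν^{(2)} : Λ² F^× → K^×`, with target the residue field itself. -/
def IsTame2U (ν : F → ℤ) (res : F → K) (D : ⋀[ℚ]^2 (UnitsQ F) →ₗ[ℚ] UnitsQ K) : Prop :=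
  ∀ π u : F, π ≠ 0 → ν π = 1 → u ≠ 0 → ν u = 0 → D (wedgeF 2 ![π, u]) = mkQ (res u)

/-- `D` is the tame symbol `∂_ν : B₂(F) ⊗ F^× → B₂(K)`. -/
def IsTameB1 (ν : F → ℤ) (res : F → K)
    (D : B2 F ⊗[ℚ] UnitsQ F →ₗ[ℚ] B2 K) : Prop :=
  (∀ a b : F, a ≠ 0 → a ≠ 1 → ν a ≠ 0 → b ≠ 0 → D (B2.gen a ⊗ₜ mkQ b) = 0) ∧
  (∀ u b : F, u ≠ 0 → ν u = 0 → b ≠ 0 →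
    D (B2.gen u ⊗ₜ mkQ b) = -((ν b : ℚ) • B2.gen (res u)))

/-- `D` is the tame symbol `∂_ν : B₂(F) ⊗ Λ² F^× → B₂(K) ⊗ K^×`, where `D2` is the tame
symbol `∂_ν^{(2)}`. -/
def IsTameB2 (ν : F → ℤ) (res : F → K) (D2 : ⋀[ℚ]^2 (UnitsQ F) →ₗ[ℚ] UnitsQ K)
    (D : B2 F ⊗[ℚ] (⋀[ℚ]^2 (UnitsQ F)) →ₗ[ℚ] B2 K ⊗[ℚ] UnitsQ K) : Prop :=
  (∀ (a : F) (b : ⋀[ℚ]^2 (UnitsQ F)), a ≠ 0 → a ≠ 1 → ν a ≠ 0 → D (B2.gen a ⊗ₜ b) = 0) ∧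
  (∀ (u : F) (b : ⋀[ℚ]^2 (UnitsQ F)), u ≠ 0 → ν u = 0 →
    D (B2.gen u ⊗ₜ b) = -(B2.gen (res u) ⊗ₜ D2 b))

/-- `D` is the tame symbol `∂_ν : B₂(F) ⊗ Λ^{n+1} F^× → B₂(K) ⊗ Λ^n K^×`, where `Dn` is
the tame symbol `∂_ν^{(n+1)}`. -/
def IsTameBGen (ν : F → ℤ) (res : F → K) (n : ℕ)
    (Dn : ⋀[ℚ]^(n + 1) (UnitsQ F) →ₗ[ℚ] ⋀[ℚ]^n (UnitsQ K))
    (D : B2 F ⊗[ℚ] (⋀[ℚ]^(n + 1) (UnitsQ F)) →ₗ[ℚ] B2 K ⊗[ℚ] (⋀[ℚ]^n (UnitsQ K))) : Prop :=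
  (∀ (a : F) (b : ⋀[ℚ]^(n + 1) (UnitsQ F)), a ≠ 0 → a ≠ 1 → ν a ≠ 0 →
    D (B2.gen a ⊗ₜ b) = 0) ∧
  (∀ (u : F) (b : ⋀[ℚ]^(n + 1) (UnitsQ F)), u ≠ 0 → ν u = 0 →
    D (B2.gen u ⊗ₜ b) = -(B2.gen (res u) ⊗ₜ Dn b))

end Valuations

section Fields

variable (k F : Type u) [Field k] [Field F] [Algebra k F]

/-- `F` is a finitely generated extension of `k` of transcendence degree `1`. -/
def IsFields1 : Prop :=
  (∃ s : Finset F, IntermediateField.adjoin k (s : Set F) = ⊤) ∧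
  ∃ x : F, Transcendental k x ∧
    Algebra.IsAlgebraic (IntermediateField.adjoin k {x}) F

/-- `F` is a finitely generated extension of `k` of transcendence degree `2`. -/
def IsFields2 : Prop :=
  (∃ s : Finset F, IntermediateField.adjoin k (s : Set F) = ⊤) ∧
  ∃ x y : F, AlgebraicIndependent k ![x, y] ∧
    Algebra.IsAlgebraic (IntermediateField.adjoin k {x, y}) F

/-- `res : F → k` is the canonical residue map of `ν` onto `k`
(restricting to the identity on `k`). -/
def GoodResK (ν : F → ℤ) (res : F → k) : Prop :=
  IsResidue ν res ∧ ∀ c : k, res (algebraMap k F c) = c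

/-- The set `val(F)` of discrete valuations of `F` trivial on `k` with residue field `k`. -/
def ValInd : Type u :=
  {ν : F → ℤ // IsDVal ν ∧ (∀ c : k, c ≠ 0 → ν (algebraMap k F c) = 0) ∧
    ∃ res : F → k, GoodResK k F ν res}

/-- `h : Λ³ F^× → B₂(k)` is a lifted reciprocity map on `F ∈ Fields₁`:
(1) `-δ₂(h a) = Σ_{ν ∈ val(F)} ∂_ν^{(3)} a`;
(2) `h (δ₃ c) = Σ_{ν ∈ val(F)} ∂_ν c`;
(3) `h` vanishes on the image of `Λ² F^× ⊗ k^× → Λ³ F^×`. -/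
def IsLiftedRec (h : ⋀[ℚ]^3 (UnitsQ F) →ₗ[ℚ] B2 k) : Prop :=
  (∀ d2 : B2 k →ₗ[ℚ] ⋀[ℚ]^2 (UnitsQ k), IsDelta2 k d2 →
    ∀ res : ∀ _ : ValInd k F, F → k, (∀ v : ValInd k F, GoodResK k F v.1 (res v)) →
    ∀ D : ∀ _ : ValInd k F, ⋀[ℚ]^3 (UnitsQ F) →ₗ[ℚ] ⋀[ℚ]^2 (UnitsQ k),
      (∀ v : ValInd k F, IsTame v.1 (res v) 2 (D v)) →
    ∀ a : ⋀[ℚ]^3 (UnitsQ F), -(d2 (h a)) = ∑ᶠ v : ValInd k F, D v a) ∧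
  (∀ d3 : B2 F ⊗[ℚ] UnitsQ F →ₗ[ℚ] ⋀[ℚ]^3 (UnitsQ F), IsDelta3 F d3 →
    ∀ res : ∀ _ : ValInd k F, F → k, (∀ v : ValInd k F, GoodResK k F v.1 (res v)) →
    ∀ DB : ∀ _ : ValInd k F, B2 F ⊗[ℚ] UnitsQ F →ₗ[ℚ] B2 k,
      (∀ v : ValInd k F, IsTameB1 v.1 (res v) (DB v)) →
    ∀ c : B2 F ⊗[ℚ] UnitsQ F, h (d3 c) = ∑ᶠ v : ValInd k F, DB v c) ∧
  (∀ (y z : F) (c : k), y ≠ 0 → z ≠ 0 → c ≠ 0 →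
    h (wedgeF 3 ![y, z, algebraMap k F c]) = 0)

end Fields

/-- The degree `[K : j(F)]` of a field embedding. -/
noncomputable def fieldDeg {F K : Type u} [Field F] [Field K] (j : F →+* K) : ℕ :=
  letI : Algebra F K := j.toAlgebra
  Module.finrank F K

/-- The pullback `j^* h = (1/[F₂ : j(F₁)]) · h ∘ j_*` of a lifted reciprocity map. -/
noncomputable def pullRec (k F₁ F₂ : Type u) [Field k] [Field F₁] [Field F₂]
    (j : F₁ →+* F₂) (h : ⋀[ℚ]^3 (UnitsQ F₂) →ₗ[ℚ] B2 k) :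
    ⋀[ℚ]^3 (UnitsQ F₁) →ₗ[ℚ] B2 k :=
  ((fieldDeg j : ℚ))⁻¹ • (h ∘ₗ powMap 3 (unitsQMap j))

end ChowPrelim

noncomputable section ChowPrelim2

universe u

open scoped TensorProduct

/-- The monic irreducible polynomials over `F`, indexing the closed points of `𝔸¹_F`,
i.e. the general discrete valuations of `F(t)`. -/
def MonicIrr (F : Type u) [Field F] : Type u :=
  {p : Polynomial F // p.Monic ∧ Irreducible p}

/-- The residue field `F(p) = F[t]/(p)` of the valuation attached to a monic irreducible
polynomial `p`. -/
def ResField {F : Type u} [Field F] (p : MonicIrr F) : Type u := AdjoinRoot p.1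

noncomputable instance ResField.instField {F : Type u} [Field F] (p : MonicIrr F) :
    Field (ResField p) :=
  letI : Fact (Irreducible p.1) := ⟨p.2.2⟩
  inferInstanceAs (Field (AdjoinRoot p.1))

/-- `ν` is the discrete valuation of `F(t)` attached to the monic irreducible polynomial `p`. -/
def IsNuP {F : Type u} [Field F] (p : MonicIrr F) (ν : RatFunc F → ℤ) : Prop :=
  IsDVal ν ∧ ν (algebraMap (Polynomial F) (RatFunc F) p.1) = 1 ∧
    ∀ g : Polynomial F, g ≠ 0 → ¬(p.1 ∣ g) →
      ν (algebraMap (Polynomial F) (RatFunc F) g) = 0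

/-- `res` is the canonical residue map `F(t) → F(p)` of the valuation attached to `p`. -/
def IsResP {F : Type u} [Field F] (p : MonicIrr F) (ν : RatFunc F → ℤ)
    (res : RatFunc F → ResField p) : Prop :=
  IsResidue ν res ∧ ∀ g : Polynomial F,
    res (algebraMap (Polynomial F) (RatFunc F) g) =
      (AdjoinRoot.mk p.1 g : AdjoinRoot p.1)

/-- Bundled realization of the residue field of a discrete valuation `ν` on `L`
(trivial on `k`): a field `R` with a `k`-algebra structure together with the residue map. -/
structure ResData (k L : Type u) [Field k] [Field L] [Algebra k L] (ν : L → ℤ) :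
    Type (u + 1) where
  R : Type u
  [fieldR : Field R]
  [algR : Algebra k R]
  res : L → R
  isRes : IsResidue ν res
  compat : ∀ c : k, res (algebraMap k L c) = algebraMap k R c

attribute [instance] ResData.fieldR ResData.algR

/-- The set `dval(L)` of divisorial valuations of `L ∈ Fields₂`: discrete valuations trivial
on `k` whose residue field is a finitely generated extension of `k` of transcendence
degree `1`. -/
def DValInd (k L : Type u) [Field k] [Field L] [Algebra k L] : Type u :=
  {ν : L → ℤ // IsDVal ν ∧ (∀ c : k, c ≠ 0 → ν (algebraMap k L c) = 0) ∧
    ∃ rd : ResData k L ν, IsFields1 k rd.R}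

/-- A height-one prime ideal (in a domain). -/
def IsHeightOne {R : Type u} [CommRing R] (p : Ideal R) : Prop :=
  p.IsPrime ∧ p ≠ ⊥ ∧ ∀ q : Ideal R, q.IsPrime → q < p → q = ⊥

/-- `R/p` is regular, i.e. (for a one-dimensional local ring) the maximal ideal of `R/p`
is principal. -/
def QuotRegular {R : Type u} [CommRing R] [IsLocalRing R] (p : Ideal R) : Prop :=
  ∃ t : R, Ideal.map (Ideal.Quotient.mk p) (IsLocalRing.maximalIdeal R) =
    Ideal.span {Ideal.Quotient.mk p t}

/-- The height-one primes `p` of `R` with `R/p` regular. -/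
def RegPrimes (R : Type u) [CommRing R] [IsLocalRing R] : Type u :=
  {p : Ideal R // IsHeightOne p ∧ QuotRegular p}

instance RegPrimes.isPrime {R : Type u} [CommRing R] [IsLocalRing R] (p : RegPrimes R) :
    p.1.IsPrime := p.2.1.1

/-- The residue field `κ(p) = Frac(R/p)` of a prime `p`. -/
def ResFieldP {R : Type u} [CommRing R] [IsLocalRing R] [IsDomain R] (p : RegPrimes R) :
    Type u := FractionRing (R ⧸ p.1)

noncomputable instance ResFieldP.instField {R : Type u} [CommRing R] [IsLocalRing R]
    [IsDomain R] (p : RegPrimes R) : Field (ResFieldP p) :=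
  inferInstanceAs (Field (FractionRing (R ⧸ p.1)))

/-- `ν` is the discrete valuation `ν_p` of `L = Frac R` attached to a height-one prime `p`:
it is nonnegative on `R` and positive exactly on `p`. -/
def IsNuPrime {R L : Type u} [CommRing R] [Field L] [Algebra R L] (p : Ideal R)
    (ν : L → ℤ) : Prop :=
  IsDVal ν ∧ (∀ x : R, x ≠ 0 → 0 ≤ ν (algebraMap R L x)) ∧
    ∀ x : R, x ≠ 0 → (x ∈ p ↔ 0 < ν (algebraMap R L x))

/-- `res` is the canonical residue map `L → κ(p)` of the valuation `ν_p`. -/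
def IsResPrime {R L : Type u} [CommRing R] [IsLocalRing R] [IsDomain R] [Field L]
    [Algebra R L] (p : RegPrimes R) (ν : L → ℤ) (res : L → ResFieldP p) : Prop :=
  IsResidue ν res ∧ ∀ x : R,
    res (algebraMap R L x) =
      algebraMap (R ⧸ p.1) (FractionRing (R ⧸ p.1)) (Ideal.Quotient.mk p.1 x)

/-- `ν̄` is the discrete valuation of `κ(p)` attached to the discrete valuation ring `R/p`:
nonnegative on `R/p` and positive exactly on the image of the maximal ideal of `R`. -/
def IsNuBar {R : Type u} [CommRing R] [IsLocalRing R] [IsDomain R] (p : RegPrimes R)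
    (ν : ResFieldP p → ℤ) : Prop :=
  IsDVal ν ∧
  (∀ x : R ⧸ p.1, x ≠ 0 →
    0 ≤ ν (algebraMap (R ⧸ p.1) (FractionRing (R ⧸ p.1)) x)) ∧
  ∀ x : R, Ideal.Quotient.mk p.1 x ≠ 0 →
    (x ∈ IsLocalRing.maximalIdeal R ↔
      0 < ν (algebraMap (R ⧸ p.1) (FractionRing (R ⧸ p.1)) (Ideal.Quotient.mk p.1 x)))

/-- `res` is the canonical residue map `κ(p) → k` of the valuation `ν̄_p`
(restricting to the identity on `k`). -/
def IsResBar {k R : Type u} [Field k] [CommRing R] [IsLocalRing R] [IsDomain R]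
    [Algebra k R] (p : RegPrimes R) (ν : ResFieldP p → ℤ) (res : ResFieldP p → k) : Prop :=
  IsResidue ν res ∧ ∀ c : k,
    res (algebraMap (R ⧸ p.1) (FractionRing (R ⧸ p.1))
      (Ideal.Quotient.mk p.1 (algebraMap k R c))) = c

/-- The Steinberg relations subspace of `Λ^n F^×` (with ℚ-coefficients). -/
def MilnorRel (F : Type u) [Field F] : (n : ℕ) → Submodule ℚ (⋀[ℚ]^n (UnitsQ F))
  | 0 => ⊥
  | 1 => ⊥
  | (m + 2) => Submodule.span ℚ
      {x | ∃ (a : F) (v : Fin m → F), a ≠ 0 ∧ a ≠ 1 ∧ (∀ i, v i ≠ 0) ∧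
        x = wedgeF (m + 2) (Fin.cons a (Fin.cons (1 - a) v))}

/-- The rational Milnor K-group `K_n^M(F) ⊗ ℚ`: the quotient of `Λ^n F^×` by the
Steinberg relations. -/
def MilnorQ (F : Type u) [Field F] (n : ℕ) : Type u :=
  (⋀[ℚ]^n (UnitsQ F)) ⧸ MilnorRel F n

noncomputable instance MilnorQ.instAddCommGroup (F : Type u) [Field F] (n : ℕ) :
    AddCommGroup (MilnorQ F n) :=
  inferInstanceAs (AddCommGroup ((⋀[ℚ]^n (UnitsQ F)) ⧸ MilnorRel F n))

noncomputable instance MilnorQ.instModule (F : Type u) [Field F] (n : ℕ) :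
    Module ℚ (MilnorQ F n) :=
  inferInstanceAs (Module ℚ ((⋀[ℚ]^n (UnitsQ F)) ⧸ MilnorRel F n))

/-- The class of an element of `Λ^n F^×` in `K_n^M(F) ⊗ ℚ`. -/
def MilnorQ.mk {F : Type u} [Field F] {n : ℕ} (x : ⋀[ℚ]^n (UnitsQ F)) : MilnorQ F n :=
  Submodule.Quotient.mk x

end ChowPrelim2

open scoped TensorProduct

universe u


set_option synthInstance.maxHeartbeats 400000
set_option maxHeartbeats 1000000

/- chunk 1 -/
section Chunk1
variable {F : Type u} [Field F]

theorem mkQ_eq {x : F} (h : x ≠ 0) :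
    mkQ x = (1 : ℚ) ⊗ₜ[ℤ] (Additive.ofMul (Units.mk0 x h)) := by
  rw [mkQ]; simp [h]

theorem mkQ_mul {x y : F} (hx : x ≠ 0) (hy : y ≠ 0) :
    mkQ (x * y) = mkQ x + mkQ y := by
  rw [mkQ_eq (mul_ne_zero hx hy), mkQ_eq hx, mkQ_eq hy, Units.mk0_mul x y, ofMul_mul,
    TensorProduct.tmul_add]

theorem mkQ_one : mkQ (1 : F) = 0 := by
  have := mkQ_mul (x := (1:F)) (y := (1:F)) one_ne_zero one_ne_zero
  rw [mul_one] at this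
  exact left_eq_add.mp this

theorem mkQ_pow {x : F} (hx : x ≠ 0) (m : ℕ) :
    mkQ (x ^ m) = (m : ℚ) • mkQ x := by
  induction m with
  | zero => simpa using mkQ_one
  | succ i ih =>
    rw [pow_succ, mkQ_mul (pow_ne_zero _ hx) hx, ih]
    push_cast; rw [add_smul, one_smul]

theorem mkQ_inv {x : F} (hx : x ≠ 0) : mkQ x⁻¹ = -mkQ x := by
  have := mkQ_mul (inv_ne_zero hx) hx
  rw [inv_mul_cancel₀ hx, mkQ_one] at this
  exact eq_neg_of_add_eq_zero_left this.symm

theorem mkQ_zpow {x : F} (hx : x ≠ 0) (n : ℤ) :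
    mkQ (x ^ n) = (n : ℚ) • mkQ x := by
  rcases le_or_gt 0 n with h | h
  · lift n to ℕ using h
    rw [zpow_natCast, mkQ_pow hx]; norm_num
  · obtain ⟨m, rfl⟩ : ∃ m : ℕ, n = -(m : ℤ) := ⟨n.natAbs, by omega⟩
    rw [zpow_neg, zpow_natCast, mkQ_inv (pow_ne_zero _ hx), mkQ_pow hx]
    push_cast; rw [neg_smul]

theorem IsDVal.one {ν : F → ℤ} (hν : IsDVal ν) : ν 1 = 0 := by
  have := hν.map_mul 1 1 one_ne_zero one_ne_zero
  simpa using this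

theorem IsDVal.zpow {ν : F → ℤ} (hν : IsDVal ν) {x : F} (hx : x ≠ 0) (n : ℤ) :
    ν (x ^ n) = n * ν x := by
  have hpow : ∀ m : ℕ, ν (x ^ m) = m * ν x := by
    intro m
    induction m with
    | zero => simpa using hν.one
    | succ i ih =>
      rw [pow_succ, hν.map_mul _ _ (pow_ne_zero _ hx) hx, ih]; push_cast; ring
  rcases le_or_gt 0 n with h | h
  · lift n to ℕ using h
    rw [zpow_natCast, hpow]
  · obtain ⟨m, rfl⟩ : ∃ m : ℕ, n = -(m : ℤ) := ⟨n.natAbs, by omega⟩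
    have hxm : x ^ (m:ℤ) ≠ 0 := zpow_ne_zero _ hx
    have : ν (x ^ (-(m:ℤ)) * x ^ (m:ℤ)) = ν (x ^ (-(m:ℤ))) + ν (x ^ (m:ℤ)) :=
      hν.map_mul _ _ (zpow_ne_zero _ hx) hxm
    rw [← zpow_add₀ hx, neg_add_cancel] at this
    simp only [zpow_zero] at this
    rw [hν.one] at this
    have h2 : ν (x ^ (m:ℤ)) = m * ν x := by rw [zpow_natCast, hpow]
    rw [neg_mul]; omega

end Chunk1

noncomputable section Chunk3

/-- Alternating-map avatar of `wedgeF`'s underlying family map. -/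
noncomputable def wedgeA {M : Type u} [AddCommGroup M] [Module ℚ M] (n : ℕ) :
    M [⋀^Fin n]→ₗ[ℚ] (⋀[ℚ]^n M) :=
  (ExteriorAlgebra.ιMulti ℚ n).codRestrict (⋀[ℚ]^n M)
    (fun v => ExteriorAlgebra.ιMulti_range ℚ n ⟨v, rfl⟩)

theorem wedgeF_eq_wedgeA {F : Type u} [Field F] (n : ℕ) (x : Fin n → F) :
    wedgeF n x = wedgeA n (fun i => mkQ (x i)) := rfl

variable {F K : Type u} [Field F] [Field K]

/-- Tame symbols kill wedges of units. -/
theorem tame_units {ν : F → ℤ} {res : F → K} {n : ℕ}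
    {D : ⋀[ℚ]^(n + 1) (UnitsQ F) →ₗ[ℚ] ⋀[ℚ]^n (UnitsQ K)}
    (hν : IsDVal ν) (hD : IsTame ν res n D) (u : Fin (n+1) → F)
    (hu : ∀ i, u i ≠ 0 ∧ ν (u i) = 0) :
    D (wedgeF (n + 1) u) = 0 := by
  obtain ⟨t, ht0, ht1⟩ := hν.surj 1
  have htu : t * u 0 ≠ 0 := mul_ne_zero ht0 (hu 0).1
  have hν_tu : ν (t * u 0) = 1 := by
    rw [hν.map_mul _ _ ht0 (hu 0).1, (hu 0).2, ht1]; ring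
  have htail : ∀ i : Fin n, Fin.tail u i ≠ 0 ∧ ν (Fin.tail u i) = 0 := fun i => hu i.succ
  have h1 := hD (t * u 0) (Fin.tail u) htu hν_tu htail
  have h2 := hD t (Fin.tail u) ht0 ht1 htail
  have key : wedgeF (n+1) (Fin.cons (t * u 0) (Fin.tail u)) =
      wedgeF (n+1) (Fin.cons t (Fin.tail u)) + wedgeF (n+1) u := by
    have hsplit : mkQ (t * u 0) = mkQ t + mkQ (u 0) := mkQ_mul ht0 (hu 0).1
    have e1 : wedgeF (n+1) (Fin.cons (t * u 0) (Fin.tail u)) =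
        wedgeA (n+1) (Fin.cons (mkQ (t * u 0)) (fun i => mkQ (Fin.tail u i))) := by
      rw [wedgeF_eq_wedgeA]
      congr 1
      funext i
      refine Fin.cases ?_ ?_ i <;> simp
    have e2 : wedgeF (n+1) (Fin.cons t (Fin.tail u)) =
        wedgeA (n+1) (Fin.cons (mkQ t) (fun i => mkQ (Fin.tail u i))) := by
      rw [wedgeF_eq_wedgeA]
      congr 1
      funext i
      refine Fin.cases ?_ ?_ i <;> simp
    have e3 : wedgeF (n+1) u =
        wedgeA (n+1) (Fin.cons (mkQ (u 0)) (fun i => mkQ (Fin.tail u i))) := by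
      rw [wedgeF_eq_wedgeA]
      congr 1
      funext i
      refine Fin.cases ?_ ?_ i <;> simp [Fin.tail]
    rw [e1, e2, e3, hsplit]
    exact (wedgeA (n+1)).toMultilinearMap.cons_add _ _ _
  have h3 : D (wedgeF (n+1) (Fin.cons (t * u 0) (Fin.tail u))) =
      D (wedgeF (n+1) (Fin.cons t (Fin.tail u))) + D (wedgeF (n+1) u) := by
    rw [key, map_add]
  rw [h1, h2] at h3
  have h4 : (wedgeF n fun i => res (Fin.tail u i)) + D (wedgeF (n+1) u) =
      (wedgeF n fun i => res (Fin.tail u i)) + 0 := by rw [add_zero]; exact h3.symm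
  exact add_left_cancel h4

end Chunk3

section Chunk4
variable {L' K₁ K₂ kk : Type u} [Field L'] [Field K₁] [Field K₂] [Field kk]

theorem residue_ne_zero {ν : L' → ℤ} {res : L' → K₁} (hres : IsResidue ν res)
    {x : L'} (hx : x ≠ 0) (hνx : ν x = 0) : res x ≠ 0 := by
  intro h
  rcases (hres.zero_iff x (Or.inr (le_of_eq hνx.symm))).1 h with h' | h'
  · exact hx h'
  · omega

theorem fin4_cases : ∀ s : Fin 4, s = 0 ∨ s = 1 ∨ s = 2 ∨ s = 3 := by decide
theorem fin3_cases : ∀ s : Fin 3, s = 0 ∨ s = 1 ∨ s = 2 := by decide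

theorem main_cancel
    (ν₁ ν₂ : L' → ℤ) (hν₁ : IsDVal ν₁) (hν₂ : IsDVal ν₂)
    (res₁ : L' → K₁) (res₂ : L' → K₂) (hres₁ : IsResidue ν₁ res₁) (hres₂ : IsResidue ν₂ res₂)
    (ν₁' : K₁ → ℤ) (ν₂' : K₂ → ℤ) (hν₁' : IsDVal ν₁') (hν₂' : IsDVal ν₂')
    (res₁' : K₁ → kk) (res₂' : K₂ → kk)
    (D₁ : ⋀[ℚ]^4 (UnitsQ L') →ₗ[ℚ] ⋀[ℚ]^3 (UnitsQ K₁)) (hD₁ : IsTame ν₁ res₁ 3 D₁)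
    (D₂ : ⋀[ℚ]^4 (UnitsQ L') →ₗ[ℚ] ⋀[ℚ]^3 (UnitsQ K₂)) (hD₂ : IsTame ν₂ res₂ 3 D₂)
    (D₁' : ⋀[ℚ]^3 (UnitsQ K₁) →ₗ[ℚ] ⋀[ℚ]^2 (UnitsQ kk)) (hD₁' : IsTame ν₁' res₁' 2 D₁')
    (D₂' : ⋀[ℚ]^3 (UnitsQ K₂) →ₗ[ℚ] ⋀[ℚ]^2 (UnitsQ kk)) (hD₂' : IsTame ν₂' res₂' 2 D₂')
    (π₁ π₂ : L') (ξ : Fin 4 → L') (c : Fin 4 → kk)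
    (hπ₁0 : π₁ ≠ 0) (hπ₂0 : π₂ ≠ 0) (hξ0 : ∀ i, ξ i ≠ 0)
    (h11 : ν₁ π₁ = 1) (h12 : ν₁ π₂ = 0) (h21 : ν₂ π₁ = 0) (h22 : ν₂ π₂ = 1)
    (hξ1 : ∀ i, ν₁ (ξ i) = 0) (hξ2 : ∀ i, ν₂ (ξ i) = 0)
    (h1' : ν₁' (res₁ π₂) = 1) (h2' : ν₂' (res₂ π₁) = 1)
    (hξ1' : ∀ i, ν₁' (res₁ (ξ i)) = 0) (hξ2' : ∀ i, ν₂' (res₂ (ξ i)) = 0)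
    (hc1 : ∀ i, res₁' (res₁ (ξ i)) = c i) (hc2 : ∀ i, res₂' (res₂ (ξ i)) = c i)
    (aa bb : Fin 4 → ℤ) :
    D₁' (D₁ (wedgeF 4 (fun i => π₁ ^ (aa i) * π₂ ^ (bb i) * ξ i))) +
      D₂' (D₂ (wedgeF 4 (fun i => π₁ ^ (aa i) * π₂ ^ (bb i) * ξ i))) = 0 := by
  classical
  set f : Fin 4 → L' := fun i => π₁ ^ (aa i) * π₂ ^ (bb i) * ξ i with hf
  set M := UnitsQ L' with hM
  set B₁ := (D₁' ∘ₗ D₁).compAlternatingMap (wedgeA (M := M) 4) with hB₁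
  set B₂ := (D₂' ∘ₗ D₂).compAlternatingMap (wedgeA (M := M) 4) with hB₂
  set C := B₁ + B₂ with hC
  set P₁ : M := mkQ π₁ with hP₁
  set P₂ : M := mkQ π₂ with hP₂
  set X : Fin 4 → M := fun i => mkQ (ξ i) with hX
  -- nonzero residues
  have hres₁π₂ : res₁ π₂ ≠ 0 := residue_ne_zero hres₁ hπ₂0 h12
  have hres₂π₁ : res₂ π₁ ≠ 0 := residue_ne_zero hres₂ hπ₁0 h21
  have hres₁ξ : ∀ i, res₁ (ξ i) ≠ 0 := fun i => residue_ne_zero hres₁ (hξ0 i) (hξ1 i)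
  have hres₂ξ : ∀ i, res₂ (ξ i) ≠ 0 := fun i => residue_ne_zero hres₂ (hξ0 i) (hξ2 i)
  -- Va
  have Va : ∀ l l' : Fin 4, C ![P₁, P₂, X l, X l'] = 0 := by
    intro l l'
    have hx1 : ![P₁, P₂, X l, X l'] = fun i => mkQ (![π₁, π₂, ξ l, ξ l'] i) := by
      funext i; fin_cases i <;> simp [hP₁, hP₂, hX]
    have hx2 : ![P₂, P₁, X l, X l'] = fun i => mkQ (![π₂, π₁, ξ l, ξ l'] i) := by
      funext i; fin_cases i <;> simp [hP₁, hP₂, hX]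
    have b1 : B₁ ![P₁, P₂, X l, X l'] = wedgeF 2 ![c l, c l'] := by
      rw [hB₁, LinearMap.compAlternatingMap_apply, hx1]
      have e0 : wedgeA (M := M) 4 (fun i => mkQ (![π₁, π₂, ξ l, ξ l'] i)) =
          wedgeF 4 ![π₁, π₂, ξ l, ξ l'] := rfl
      rw [e0]
      have e1 : D₁ (wedgeF 4 ![π₁, π₂, ξ l, ξ l']) =
          wedgeF 3 (fun i => res₁ (![π₂, ξ l, ξ l'] i)) := by
        exact hD₁ π₁ ![π₂, ξ l, ξ l'] hπ₁0 h11 (by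
          intro i; fin_cases i <;>
            simp [hπ₂0, hξ0, h12, hξ1])
      have e2 : (fun i => res₁ (![π₂, ξ l, ξ l'] i)) = ![res₁ π₂, res₁ (ξ l), res₁ (ξ l')] := by
        funext i; fin_cases i <;> simp
      have e3 : D₁' (wedgeF 3 ![res₁ π₂, res₁ (ξ l), res₁ (ξ l')]) =
          wedgeF 2 (fun i => res₁' (![res₁ (ξ l), res₁ (ξ l')] i)) := by
        exact hD₁' (res₁ π₂) ![res₁ (ξ l), res₁ (ξ l')] hres₁π₂ h1' (by
          intro i; fin_cases i <;> simp [hres₁ξ, hξ1'])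
      have e4 : (fun i => res₁' (![res₁ (ξ l), res₁ (ξ l')] i)) = ![c l, c l'] := by
        funext i; fin_cases i <;> simp [hc1]
      rw [LinearMap.comp_apply, e1, e2, e3, e4]
    have b2' : B₂ ![P₂, P₁, X l, X l'] = wedgeF 2 ![c l, c l'] := by
      rw [hB₂, LinearMap.compAlternatingMap_apply, hx2]
      have e0 : wedgeA (M := M) 4 (fun i => mkQ (![π₂, π₁, ξ l, ξ l'] i)) =
          wedgeF 4 ![π₂, π₁, ξ l, ξ l'] := rfl
      rw [e0]
      have e1 : D₂ (wedgeF 4 ![π₂, π₁, ξ l, ξ l']) =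
          wedgeF 3 (fun i => res₂ (![π₁, ξ l, ξ l'] i)) := by
        exact hD₂ π₂ ![π₁, ξ l, ξ l'] hπ₂0 h22 (by
          intro i; fin_cases i <;> simp [hπ₁0, hξ0, h21, hξ2])
      have e2 : (fun i => res₂ (![π₁, ξ l, ξ l'] i)) = ![res₂ π₁, res₂ (ξ l), res₂ (ξ l')] := by
        funext i; fin_cases i <;> simp
      have e3 : D₂' (wedgeF 3 ![res₂ π₁, res₂ (ξ l), res₂ (ξ l')]) =
          wedgeF 2 (fun i => res₂' (![res₂ (ξ l), res₂ (ξ l')] i)) := by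
        exact hD₂' (res₂ π₁) ![res₂ (ξ l), res₂ (ξ l')] hres₂π₁ h2' (by
          intro i; fin_cases i <;> simp [hres₂ξ, hξ2'])
      have e4 : (fun i => res₂' (![res₂ (ξ l), res₂ (ξ l')] i)) = ![c l, c l'] := by
        funext i; fin_cases i <;> simp [hc2]
      rw [LinearMap.comp_apply, e1, e2, e3, e4]
    have hswap : ![P₁, P₂, X l, X l'] =
        ![P₂, P₁, X l, X l'] ∘ ⇑(Equiv.swap (0 : Fin 4) 1) := by
      funext t; fin_cases t <;>
        simp [Equiv.swap_apply_left, Equiv.swap_apply_right, Equiv.swap_apply_of_ne_of_ne]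
    have b2 : B₂ ![P₁, P₂, X l, X l'] = -wedgeF 2 ![c l, c l'] := by
      rw [hswap, AlternatingMap.map_swap _ _ (by decide : (0 : Fin 4) ≠ 1), b2']
    rw [hC, AlternatingMap.add_apply, b1, b2, add_neg_cancel]
  -- Vb
  have Vb : ∀ l l' l'' : Fin 4, C ![P₁, X l, X l', X l''] = 0 := by
    intro l l' l''
    have hx1 : ![P₁, X l, X l', X l''] = fun i => mkQ (![π₁, ξ l, ξ l', ξ l''] i) := by
      funext i; fin_cases i <;> simp [hP₁, hX]
    have b1 : B₁ ![P₁, X l, X l', X l''] = 0 := by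
      rw [hB₁, LinearMap.compAlternatingMap_apply, hx1]
      have e0 : wedgeA (M := M) 4 (fun i => mkQ (![π₁, ξ l, ξ l', ξ l''] i)) =
          wedgeF 4 ![π₁, ξ l, ξ l', ξ l''] := rfl
      rw [e0]
      have e1 : D₁ (wedgeF 4 ![π₁, ξ l, ξ l', ξ l'']) =
          wedgeF 3 (fun i => res₁ (![ξ l, ξ l', ξ l''] i)) :=
        hD₁ π₁ ![ξ l, ξ l', ξ l''] hπ₁0 h11 (by
          intro i; fin_cases i <;> simp [hξ0, hξ1])
      have e2 : D₁' (wedgeF 3 (fun i => res₁ (![ξ l, ξ l', ξ l''] i))) = 0 := by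
        refine tame_units hν₁' hD₁' _ (fun i => ?_)
        fin_cases i <;> simp [hres₁ξ, hξ1']
      rw [LinearMap.comp_apply, e1, e2]
    have b2 : B₂ ![P₁, X l, X l', X l''] = 0 := by
      rw [hB₂, LinearMap.compAlternatingMap_apply, hx1]
      have e0 : wedgeA (M := M) 4 (fun i => mkQ (![π₁, ξ l, ξ l', ξ l''] i)) =
          wedgeF 4 ![π₁, ξ l, ξ l', ξ l''] := rfl
      rw [e0]
      have e1 : D₂ (wedgeF 4 ![π₁, ξ l, ξ l', ξ l'']) = 0 := by
        refine tame_units hν₂ hD₂ _ (fun i => ?_)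
        fin_cases i <;> simp [hπ₁0, h21, hξ0, hξ2]
      rw [LinearMap.comp_apply, e1, map_zero]
    rw [hC, AlternatingMap.add_apply, b1, b2, add_zero]
  -- Vc
  have Vc : ∀ l l' l'' : Fin 4, C ![P₂, X l, X l', X l''] = 0 := by
    intro l l' l''
    have hx1 : ![P₂, X l, X l', X l''] = fun i => mkQ (![π₂, ξ l, ξ l', ξ l''] i) := by
      funext i; fin_cases i <;> simp [hP₂, hX]
    have b1 : B₁ ![P₂, X l, X l', X l''] = 0 := by
      rw [hB₁, LinearMap.compAlternatingMap_apply, hx1]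
      have e0 : wedgeA (M := M) 4 (fun i => mkQ (![π₂, ξ l, ξ l', ξ l''] i)) =
          wedgeF 4 ![π₂, ξ l, ξ l', ξ l''] := rfl
      rw [e0]
      have e1 : D₁ (wedgeF 4 ![π₂, ξ l, ξ l', ξ l'']) = 0 := by
        refine tame_units hν₁ hD₁ _ (fun i => ?_)
        fin_cases i <;> simp [hπ₂0, h12, hξ0, hξ1]
      rw [LinearMap.comp_apply, e1, map_zero]
    have b2 : B₂ ![P₂, X l, X l', X l''] = 0 := by
      rw [hB₂, LinearMap.compAlternatingMap_apply, hx1]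
      have e0 : wedgeA (M := M) 4 (fun i => mkQ (![π₂, ξ l, ξ l', ξ l''] i)) =
          wedgeF 4 ![π₂, ξ l, ξ l', ξ l''] := rfl
      rw [e0]
      have e1 : D₂ (wedgeF 4 ![π₂, ξ l, ξ l', ξ l'']) =
          wedgeF 3 (fun i => res₂ (![ξ l, ξ l', ξ l''] i)) :=
        hD₂ π₂ ![ξ l, ξ l', ξ l''] hπ₂0 h22 (by
          intro i; fin_cases i <;> simp [hξ0, hξ2])
      have e2 : D₂' (wedgeF 3 (fun i => res₂ (![ξ l, ξ l', ξ l''] i))) = 0 := by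
        refine tame_units hν₂' hD₂' _ (fun i => ?_)
        fin_cases i <;> simp [hres₂ξ, hξ2']
      rw [LinearMap.comp_apply, e1, e2]
    rw [hC, AlternatingMap.add_apply, b1, b2, add_zero]
  -- Vd
  have Vd : C X = 0 := by
    have hx1 : X = fun i => mkQ (ξ i) := rfl
    have b1 : B₁ X = 0 := by
      rw [hB₁, LinearMap.compAlternatingMap_apply, hx1]
      have e0 : wedgeA (M := M) 4 (fun i => mkQ (ξ i)) = wedgeF 4 ξ := rfl
      rw [e0]
      have e1 : D₁ (wedgeF 4 ξ) = 0 :=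
        tame_units hν₁ hD₁ _ (fun i => ⟨hξ0 i, hξ1 i⟩)
      rw [LinearMap.comp_apply, e1, map_zero]
    have b2 : B₂ X = 0 := by
      rw [hB₂, LinearMap.compAlternatingMap_apply, hx1]
      have e0 : wedgeA (M := M) 4 (fun i => mkQ (ξ i)) = wedgeF 4 ξ := rfl
      rw [e0]
      have e1 : D₂ (wedgeF 4 ξ) = 0 :=
        tame_units hν₂ hD₂ _ (fun i => ⟨hξ0 i, hξ2 i⟩)
      rw [LinearMap.comp_apply, e1, map_zero]
    rw [hC, AlternatingMap.add_apply, b1, b2, add_zero]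
  -- expansion data
  set vec : ∀ _ : Fin 4, Fin 3 → M := fun i => ![P₁, P₂, X i] with hvec
  set coef : Fin 4 → Fin 3 → ℚ := fun i => ![(aa i : ℚ), (bb i : ℚ), 1] with hcoef
  -- each pattern evaluates to zero
  have term0 : ∀ r : Fin 4 → Fin 3, C (fun i => vec i (r i)) = 0 := by
    intro r
    by_cases h00 : ∃ i i' : Fin 4, i ≠ i' ∧ r i = 0 ∧ r i' = 0
    · obtain ⟨i, i', hne, hi, hi'⟩ := h00
      refine C.map_eq_zero_of_eq _ (i := i) (j := i') ?_ hne
      simp [hvec, hi, hi']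
    by_cases h11' : ∃ i i' : Fin 4, i ≠ i' ∧ r i = 1 ∧ r i' = 1
    · obtain ⟨i, i', hne, hi, hi'⟩ := h11'
      refine C.map_eq_zero_of_eq _ (i := i) (j := i') ?_ hne
      simp [hvec, hi, hi']
    have hu0 : ∀ i i' : Fin 4, r i = 0 → r i' = 0 → i = i' := by
      intro i i' h h'
      by_contra hne
      exact h00 ⟨i, i', hne, h, h'⟩
    have hu1 : ∀ i i' : Fin 4, r i = 1 → r i' = 1 → i = i' := by
      intro i i' h h'
      by_contra hne
      exact h11' ⟨i, i', hne, h, h'⟩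
    by_cases he0 : ∃ i, r i = 0
    · obtain ⟨i, hi⟩ := he0
      by_cases he1 : ∃ j, r j = 1
      · obtain ⟨j, hj⟩ := he1
        have hij : j ≠ i := fun h => by rw [h, hi] at hj; exact absurd hj (by decide)
        set τ := Equiv.swap (0 : Fin 4) i with hτ
        set σ := (Equiv.swap (1 : Fin 4) (τ j)).trans τ with hσ
        have hσ0 : σ 0 = i := by
          have h1 : τ j ≠ 0 := by
            intro h
            apply hij
            have := congrArg τ h
            rwa [hτ, Equiv.swap_apply_self, Equiv.swap_apply_left] at this
          rw [hσ]
          simp only [Equiv.trans_apply]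
          rw [Equiv.swap_apply_of_ne_of_ne (by decide) (Ne.symm h1), hτ, Equiv.swap_apply_left]
        have hσ1 : σ 1 = j := by
          rw [hσ]
          simp only [Equiv.trans_apply]
          rw [Equiv.swap_apply_left, hτ, Equiv.swap_apply_self]
        have hw : (fun t => vec t (r t)) = ![P₁, P₂, X (σ 2), X (σ 3)] ∘ ⇑σ.symm := by
          funext t
          have hst : σ (σ.symm t) = t := σ.apply_symm_apply t
          rcases fin4_cases (σ.symm t) with hs | hs | hs | hs <;> rw [hs] at hst
          · rw [hσ0] at hst
            subst hst
            simp only [Function.comp_apply, hs, hi]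
            simp [hvec]
          · rw [hσ1] at hst
            subst hst
            simp only [Function.comp_apply, hs, hj]
            simp [hvec]
          · have ht0 : r t ≠ 0 := fun h => by
              have h2 : σ (2 : Fin 4) = σ 0 := by rw [hst, hσ0, hu0 t i h hi]
              exact absurd (σ.injective h2) (by decide)
            have ht1 : r t ≠ 1 := fun h => by
              have h2 : σ (2 : Fin 4) = σ 1 := by rw [hst, hσ1, hu1 t j h hj]
              exact absurd (σ.injective h2) (by decide)
            have ht2 : r t = 2 := by
              rcases fin3_cases (r t) with h | h | h
              · exact absurd h ht0
              · exact absurd h ht1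
              · exact h
            simp only [Function.comp_apply, hs, ht2]
            simp [hvec, hst]
          · have ht0 : r t ≠ 0 := fun h => by
              have h2 : σ (3 : Fin 4) = σ 0 := by rw [hst, hσ0, hu0 t i h hi]
              exact absurd (σ.injective h2) (by decide)
            have ht1 : r t ≠ 1 := fun h => by
              have h2 : σ (3 : Fin 4) = σ 1 := by rw [hst, hσ1, hu1 t j h hj]
              exact absurd (σ.injective h2) (by decide)
            have ht2 : r t = 2 := by
              rcases fin3_cases (r t) with h | h | h
              · exact absurd h ht0
              · exact absurd h ht1
              · exact h
            simp only [Function.comp_apply, hs, ht2]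
            simp [hvec, hst]
        rw [hw, C.map_perm, Va (σ 2) (σ 3), smul_zero]
      · have he1' : ∀ j, r j ≠ 1 := by push_neg at he1; exact he1
        set σ := Equiv.swap (0 : Fin 4) i with hσ
        have hσ0 : σ 0 = i := Equiv.swap_apply_left _ _
        have hw : (fun t => vec t (r t)) =
            ![P₁, X (σ 1), X (σ 2), X (σ 3)] ∘ ⇑σ.symm := by
          funext t
          have hst : σ (σ.symm t) = t := σ.apply_symm_apply t
          have htgen : ∀ s : Fin 4, s ≠ 0 → σ.symm t = s → vec t (r t) =
              ![P₁, X (σ 1), X (σ 2), X (σ 3)] (σ.symm t) := by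
            intro s hs0 hs
            rw [hs] at hst
            have ht0 : r t ≠ 0 := fun h => by
              have h2 : σ s = σ 0 := by rw [hst, hσ0, hu0 t i h hi]
              exact hs0 (σ.injective h2)
            have ht2 : r t = 2 := by
              rcases fin3_cases (r t) with h | h | h
              · exact absurd h ht0
              · exact absurd h (he1' t)
              · exact h
            rcases fin4_cases s with h | h | h | h <;> subst h
            · exact absurd rfl hs0
            · rw [hs, ht2]; simp [hvec, hst]
            · rw [hs, ht2]; simp [hvec, hst]
            · rw [hs, ht2]; simp [hvec, hst]
          rcases fin4_cases (σ.symm t) with hs | hs | hs | hs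
          · rw [hs] at hst
            rw [hσ0] at hst
            subst hst
            simp only [Function.comp_apply, hs, hi]
            simp [hvec]
          · simp only [Function.comp_apply]
            exact htgen 1 (by decide) hs
          · simp only [Function.comp_apply]
            exact htgen 2 (by decide) hs
          · simp only [Function.comp_apply]
            exact htgen 3 (by decide) hs
        rw [hw, C.map_perm, Vb (σ 1) (σ 2) (σ 3), smul_zero]
    · have he0' : ∀ i, r i ≠ 0 := by push_neg at he0; exact he0
      by_cases he1 : ∃ j, r j = 1
      · obtain ⟨j, hj⟩ := he1
        set σ := Equiv.swap (0 : Fin 4) j with hσ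
        have hσ0 : σ 0 = j := Equiv.swap_apply_left _ _
        have hw : (fun t => vec t (r t)) =
            ![P₂, X (σ 1), X (σ 2), X (σ 3)] ∘ ⇑σ.symm := by
          funext t
          have hst : σ (σ.symm t) = t := σ.apply_symm_apply t
          have htgen : ∀ s : Fin 4, s ≠ 0 → σ.symm t = s → vec t (r t) =
              ![P₂, X (σ 1), X (σ 2), X (σ 3)] (σ.symm t) := by
            intro s hs0 hs
            rw [hs] at hst
            have ht1 : r t ≠ 1 := fun h => by
              have h2 : σ s = σ 0 := by rw [hst, hσ0, hu1 t j h hj]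
              exact hs0 (σ.injective h2)
            have ht2 : r t = 2 := by
              rcases fin3_cases (r t) with h | h | h
              · exact absurd h (he0' t)
              · exact absurd h ht1
              · exact h
            rcases fin4_cases s with h | h | h | h <;> subst h
            · exact absurd rfl hs0
            · rw [hs, ht2]; simp [hvec, hst]
            · rw [hs, ht2]; simp [hvec, hst]
            · rw [hs, ht2]; simp [hvec, hst]
          rcases fin4_cases (σ.symm t) with hs | hs | hs | hs
          · rw [hs] at hst
            rw [hσ0] at hst
            subst hst
            simp only [Function.comp_apply, hs, hj]
            simp [hvec]
          · simp only [Function.comp_apply]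
            exact htgen 1 (by decide) hs
          · simp only [Function.comp_apply]
            exact htgen 2 (by decide) hs
          · simp only [Function.comp_apply]
            exact htgen 3 (by decide) hs
        rw [hw, C.map_perm, Vc (σ 1) (σ 2) (σ 3), smul_zero]
      · have he1' : ∀ j, r j ≠ 1 := by push_neg at he1; exact he1
        have hw : (fun t => vec t (r t)) = X := by
          funext t
          have ht2 : r t = 2 := by
            rcases fin3_cases (r t) with h | h | h
            · exact absurd h (he0' t)
            · exact absurd h (he1' t)
            · exact h
          rw [ht2]
          simp [hvec]
        rw [hw, Vd]
  -- expansion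
  have hdec : (fun i => mkQ (f i)) = fun i => ∑ j : Fin 3, coef i j • vec i j := by
    funext i
    have h1 : π₁ ^ (aa i) * π₂ ^ (bb i) ≠ 0 :=
      mul_ne_zero (zpow_ne_zero _ hπ₁0) (zpow_ne_zero _ hπ₂0)
    rw [hf]
    simp only []
    rw [mkQ_mul h1 (hξ0 i), mkQ_mul (zpow_ne_zero _ hπ₁0) (zpow_ne_zero _ hπ₂0),
      mkQ_zpow hπ₁0, mkQ_zpow hπ₂0, Fin.sum_univ_three]
    simp only [hcoef, hvec, Matrix.cons_val_zero, Matrix.cons_val_one, Matrix.head_cons,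
      Matrix.cons_val_two, Matrix.tail_cons, one_smul]
    rfl
  have hCf : C (fun i => mkQ (f i)) = 0 := by
    rw [hdec]
    have hms : (C.toMultilinearMap fun i => ∑ j : Fin 3, coef i j • vec i j) =
        ∑ r : Fin 4 → Fin 3, C.toMultilinearMap fun i => coef i (r i) • vec i (r i) :=
      C.toMultilinearMap.map_sum (g := fun i j => coef i j • vec i j)
    rw [show (C fun i => ∑ j : Fin 3, coef i j • vec i j) =
        (C.toMultilinearMap fun i => ∑ j : Fin 3, coef i j • vec i j) from rfl, hms]
    refine Finset.sum_eq_zero (fun r _ => ?_)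
    rw [C.toMultilinearMap.map_smul_univ (fun i => coef i (r i)) (fun i => vec i (r i))]
    rw [show (C.toMultilinearMap fun i => vec i (r i)) = C (fun i => vec i (r i)) from rfl,
      term0 r, smul_zero]
  have hgoal : D₁' (D₁ (wedgeF 4 f)) + D₂' (D₂ (wedgeF 4 f)) = C (fun i => mkQ (f i)) := by
    rw [hC, AlternatingMap.add_apply, hB₁, hB₂, LinearMap.compAlternatingMap_apply,
      LinearMap.compAlternatingMap_apply, LinearMap.comp_apply, LinearMap.comp_apply]
    rfl
  rw [hgoal, hCf]

end Chunk4

section Chunk5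

open IsLocalRing

variable {A : Type u} [CommRing A]

theorem factor_out [IsNoetherianRing A] [IsLocalRing A] (t : A)
    (ht : t ∈ maximalIdeal A) {x : A} (hx : x ≠ 0) :
    ∃ (e : ℕ) (u : A), x = t ^ e * u ∧ u ∉ Ideal.span {t} := by
  classical
  have hne : Ideal.span {t} ≠ ⊤ := fun h =>
    (mem_nonunits_iff.mp ((mem_maximalIdeal t).mp ht)) (Ideal.span_singleton_eq_top.mp h)
  have hKrull : (⨅ i : ℕ, Ideal.span {t} ^ i) = ⊥ :=
    Ideal.iInf_pow_eq_bot_of_isLocalRing _ hne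
  have hex : ∃ n : ℕ, ¬ t ^ n ∣ x := by
    by_contra h
    push_neg at h
    apply hx
    have hmem : x ∈ ⨅ i : ℕ, Ideal.span {t} ^ i := by
      rw [Submodule.mem_iInf]
      intro i
      rw [Ideal.span_singleton_pow, Ideal.mem_span_singleton]
      exact h i
    rwa [hKrull, Submodule.mem_bot] at hmem
  set N := Nat.find hex with hN
  have hspec : ¬ t ^ N ∣ x := Nat.find_spec hex
  have hNpos : 0 < N := by
    rcases Nat.eq_zero_or_pos N with h | h
    · exfalso; apply hspec; rw [h, pow_zero]; exact one_dvd x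
    · exact h
  have hdvd : t ^ (N - 1) ∣ x := by
    by_contra h
    have := Nat.find_min' hex h
    omega
  obtain ⟨u, hu⟩ := hdvd
  refine ⟨N - 1, u, hu, fun husp => ?_⟩
  rw [Ideal.mem_span_singleton] at husp
  obtain ⟨v, rfl⟩ := husp
  apply hspec
  refine ⟨v, ?_⟩
  rw [hu, ← mul_assoc, ← pow_succ]
  congr 2
  omega

theorem haupt_contradiction {R : Type u} [CommRing R] [IsDomain R] [IsNoetherianRing R]
    [IsLocalRing R] (π₁ π₂ : R) (hm : Ideal.span {π₁, π₂} = maximalIdeal R)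
    (q : Ideal R) (hq : q.IsPrime) (hq0 : q ≠ ⊥) (hqm : q < maximalIdeal R)
    (n : ℕ) (hpow : π₂ ^ n ∈ Ideal.span {π₁}) : False := by
  classical
  have hπ₁m : π₁ ∈ maximalIdeal R := by
    rw [← hm]; exact Ideal.subset_span (by simp)
  have hπ₂m : π₂ ∈ maximalIdeal R := by
    rw [← hm]; exact Ideal.subset_span (by simp)
  have hmne : maximalIdeal R ≠ ⊤ := Ideal.IsPrime.ne_top' 
  -- π₁ ∉ q
  have hπ₁q : π₁ ∉ q := by
    intro hmem
    have h1 : Ideal.span {π₁} ≤ q := by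
      rw [Ideal.span_le]; simpa using hmem
    have h2 : π₂ ∈ q := hq.mem_of_pow_mem n (h1 hpow)
    have h3 : maximalIdeal R ≤ q := by
      rw [← hm, Ideal.span_le]
      intro x hx
      rcases hx with h | h
      · subst h; exact hmem
      · simp only [Set.mem_singleton_iff] at h; subst h; exact h2
    exact absurd h3 (not_le_of_gt hqm)
  -- quotient ring
  set S := R ⧸ Ideal.span {π₁} with hS
  have hspanne : Ideal.span {π₁} ≠ ⊤ := fun h =>
    (mem_nonunits_iff.mp ((mem_maximalIdeal π₁).mp hπ₁m)) (Ideal.span_singleton_eq_top.mp h)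
  haveI : Nontrivial S := Ideal.Quotient.nontrivial_iff.mpr hspanne
  haveI : IsLocalRing S := IsLocalRing.of_surjective' _ Ideal.Quotient.mk_surjective
  set mk := Ideal.Quotient.mk (Ideal.span {π₁}) with hmk
  set tb : S := mk π₂ with htb
  have htbn : tb ^ n = 0 := by
    rw [htb, ← map_pow, Ideal.Quotient.eq_zero_iff_mem]
    exact hpow
  have hms : Ideal.map mk (maximalIdeal R) = Ideal.span {tb} := by
    rw [← hm, Ideal.map_span]
    have : (⇑mk) '' {π₁, π₂} = {0, tb} := by
      rw [Set.image_pair]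
      congr 1
      rw [Ideal.Quotient.eq_zero_iff_mem]
      exact Ideal.subset_span (by simp)
    rw [this]
    exact Submodule.span_insert_zero
  have hcm : Ideal.comap mk (Ideal.map mk (maximalIdeal R)) = maximalIdeal R := by
    rw [Ideal.comap_map_of_surjective mk Ideal.Quotient.mk_surjective]
    have : Ideal.comap mk ⊥ = Ideal.span {π₁} := by
      rw [← RingHom.ker_eq_comap_bot]; exact Ideal.mk_ker
    rw [this]
    exact sup_eq_left.mpr (by rw [Ideal.span_le]; simpa using hπ₁m)
  have hUnit : ∀ s : S, s ∉ Ideal.span {tb} → IsUnit s := by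
    intro s hs
    obtain ⟨x, rfl⟩ := Ideal.Quotient.mk_surjective s
    by_cases hx : IsUnit x
    · exact hx.map mk
    · exfalso
      apply hs
      rw [← hms]
      exact Ideal.mem_map_of_mem mk (hx)
  have htbm : tb ∈ maximalIdeal S := by
    by_contra h
    have : IsUnit tb := not_not.mp (fun h2 => h (h2))
    have h1 : Ideal.span {tb} = ⊤ := Ideal.span_singleton_eq_top.mpr this
    rw [← hms] at h1
    have := hcm
    rw [h1, Ideal.comap_top] at this
    exact hmne this.symm
  -- classification of ideals of S
  have hexJ : ∀ J : Ideal S, ∃ b : ℕ, tb ^ b ∈ J := fun J => ⟨n, by rw [htbn]; exact J.zero_mem⟩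
  set cJ : Ideal S → ℕ := fun J => Nat.find (hexJ J) with hcJ
  have hclass : ∀ J : Ideal S, J = Ideal.span {tb ^ cJ J} := by
    intro J
    apply le_antisymm
    · intro s hs
      rcases eq_or_ne s 0 with rfl | hs0
      · exact Submodule.zero_mem _
      · obtain ⟨e, u, rfl, hu⟩ := factor_out tb htbm hs0
        have huu : IsUnit u := hUnit u hu
        obtain ⟨w, hw⟩ := huu
        have hte : tb ^ e ∈ J := by
          have : tb ^ e = tb ^ e * u * ↑w⁻¹ := by
            rw [mul_assoc, ← hw, Units.mul_inv, mul_one]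
          rw [this]
          exact Ideal.mul_mem_right _ _ hs
        have hbe : cJ J ≤ e := Nat.find_min' (hexJ J) hte
        rw [Ideal.mem_span_singleton]
        exact Dvd.dvd.mul_right (pow_dvd_pow tb hbe) u
    · rw [Ideal.span_le]
      intro x hx
      simp only [Set.mem_singleton_iff] at hx
      subst hx
      exact Nat.find_spec (hexJ J)
  have hcmono : ∀ J J' : Ideal S, J ≤ J' → cJ J' ≤ cJ J :=
    fun J J' h => Nat.find_min' (hexJ J') (h (Nat.find_spec (hexJ J)))
  have hcbound : ∀ J : Ideal S, cJ J ≤ n :=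
    fun J => Nat.find_min' (hexJ J) (by rw [htbn]; exact J.zero_mem)
  -- localization at q
  set Rq := Localization.AtPrime q with hRq
  haveI : IsNoetherianRing Rq := IsLocalization.isNoetherianRing q.primeCompl Rq inferInstance
  have hMle : q.primeCompl ≤ nonZeroDivisors R :=
    le_nonZeroDivisors_of_noZeroDivisors (fun h => h q.zero_mem)
  haveI : IsDomain Rq := IsLocalization.isDomain_localization hMle
  set alg := algebraMap R Rq with halg
  have hinj : Function.Injective alg := IsLocalization.injective Rq hMle
  set qe := Ideal.map alg q with hqe
  have hqem : qe ≤ maximalIdeal Rq := by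
    rw [hqe, Ideal.map, Ideal.span_le]
    rintro y ⟨x, hx, rfl⟩
    simp only [SetLike.mem_coe]
    rw [mem_maximalIdeal, mem_nonunits_iff]
    rw [IsLocalization.AtPrime.isUnit_to_map_iff Rq q x]
    exact fun h => h hx
  -- symbolic powers
  set Q : ℕ → Ideal R := fun i => Ideal.comap alg (qe ^ i) with hQ
  have hQdesc : ∀ i, Q (i + 1) ≤ Q i :=
    fun i => Ideal.comap_mono (Ideal.pow_le_pow_right (by omega))
  -- find stabilization index of the images in S
  have hstab : ∃ i : ℕ, cJ (Ideal.map mk (Q i)) = cJ (Ideal.map mk (Q (i + 1))) := by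
    by_contra h
    push_neg at h
    have hsm : StrictMono (fun i => cJ (Ideal.map mk (Q i))) := by
      apply strictMono_nat_of_lt_succ
      intro i
      have hle : cJ (Ideal.map mk (Q i)) ≤ cJ (Ideal.map mk (Q (i + 1))) :=
        hcmono _ _ (Ideal.map_mono (hQdesc i))
      exact lt_of_le_of_ne hle (h i)
    have h1 : n + 1 ≤ cJ (Ideal.map mk (Q (n + 1))) := hsm.le_apply
    have h2 := hcbound (Ideal.map mk (Q (n + 1)))
    omega
  obtain ⟨i, hi⟩ := hstab
  have hIm : Ideal.map mk (Q i) = Ideal.map mk (Q (i + 1)) := by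
    rw [hclass (Ideal.map mk (Q i)), hclass (Ideal.map mk (Q (i + 1))), hi]
  -- back in R
  have hsup : Q i ⊔ Ideal.span {π₁} = Q (i + 1) ⊔ Ideal.span {π₁} := by
    have h1 := congrArg (Ideal.comap mk) hIm
    rwa [Ideal.comap_map_of_surjective mk Ideal.Quotient.mk_surjective,
      Ideal.comap_map_of_surjective mk Ideal.Quotient.mk_surjective,
      ← RingHom.ker_eq_comap_bot, Ideal.mk_ker] at h1
  have hQle : Q i ≤ Q (i + 1) ⊔ Ideal.span {π₁} • Q i := by
    intro x hx
    have hx2 : x ∈ Q (i + 1) ⊔ Ideal.span {π₁} := by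
      rw [← hsup]
      exact Submodule.mem_sup_left hx
    rw [Submodule.mem_sup] at hx2
    obtain ⟨y, hy, z, hz, rfl⟩ := hx2
    rw [Ideal.mem_span_singleton'] at hz
    obtain ⟨a, rfl⟩ := hz
    have hza : a * π₁ ∈ Q i := by
      have : a * π₁ = y + a * π₁ - y := by ring
      rw [this]
      exact Submodule.sub_mem _ hx (hQdesc i hy)
    have ha : a ∈ Q i := by
      rw [hQ, Ideal.mem_comap] at hza ⊢
      have hunit : IsUnit (alg π₁) := IsLocalization.map_units (M := q.primeCompl) Rq ⟨π₁, hπ₁q⟩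
      rw [map_mul] at hza
      obtain ⟨w, hw⟩ := hunit
      have : alg a = alg a * alg π₁ * ↑w⁻¹ := by
        rw [mul_assoc, ← hw, Units.mul_inv, mul_one]
      rw [this]
      exact Ideal.mul_mem_right _ _ hza
    refine Submodule.add_mem_sup hy ?_
    have : a * π₁ = π₁ • a := by rw [smul_eq_mul]; ring
    rw [this]
    exact Submodule.smul_mem_smul (Ideal.mem_span_singleton_self π₁) ha
  -- Nakayama I
  have hjac : Ideal.span {π₁} ≤ Ideal.jacobson ⊥ := by
    rw [IsLocalRing.jacobson_eq_maximalIdeal ⊥ bot_ne_top, Ideal.span_le]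
    simpa using hπ₁m
  have hNak := Submodule.sup_eq_sup_smul_of_le_smul_of_le_jacobson
    (IsNoetherian.noetherian (Q i)) hjac hQle
  rw [Submodule.bot_smul, sup_bot_eq] at hNak
  have hQeq : Q i = Q (i + 1) := by
    apply le_antisymm _ (hQdesc i)
    calc Q i ≤ Q (i + 1) ⊔ Q i := le_sup_right
    _ = Q (i + 1) := hNak
  -- extend back to Rq
  have hext : qe ^ i = qe ^ (i + 1) := by
    have h1 : Ideal.map alg (Q i) = qe ^ i := IsLocalization.map_comap q.primeCompl Rq _
    have h2 : Ideal.map alg (Q (i + 1)) = qe ^ (i + 1) := IsLocalization.map_comap q.primeCompl Rq _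
    rw [← h1, ← h2, hQeq]
  -- Nakayama II
  have hjac2 : qe ≤ Ideal.jacobson (⊥ : Ideal Rq) := by
    rw [IsLocalRing.jacobson_eq_maximalIdeal ⊥ bot_ne_top]
    exact hqem
  have hIN : qe ^ i ≤ qe • qe ^ i := by
    rw [smul_eq_mul, mul_comm, ← pow_succ]
    exact le_of_eq hext
  have hbot : qe ^ i = ⊥ :=
    Submodule.eq_bot_of_le_smul_of_le_jacobson_bot qe _ (IsNoetherian.noetherian (qe ^ i)) hIN hjac2
  -- contradiction
  obtain ⟨x₀, hx₀q, hx₀⟩ := Submodule.ne_bot_iff q |>.mp hq0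
  have hx₀i : alg (x₀ ^ i) ∈ qe ^ i := by
    rw [map_pow]
    exact Ideal.pow_mem_pow (Ideal.mem_map_of_mem alg hx₀q) i
  rw [hbot, Submodule.mem_bot] at hx₀i
  have : x₀ ^ i = 0 := by
    apply hinj
    rw [hx₀i, map_zero]
  exact pow_ne_zero i hx₀ this

end Chunk5

section Chunk6

open IsLocalRing

/-- The valuation of a "uniformizer" generating the positivity ideal is 1. -/
theorem ord_lemma {A F : Type u} [CommRing A] [IsDomain A] [IsNoetherianRing A] [IsLocalRing A]
    [Field F] [Algebra A F] [IsFractionRing A F]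
    (ν : F → ℤ) (hν : IsDVal ν) (t : A) (htm : t ∈ maximalIdeal A)
    (hnn : ∀ a : A, a ≠ 0 → 0 ≤ ν (algebraMap A F a))
    (hpos : ∀ a : A, a ≠ 0 → (0 < ν (algebraMap A F a) ↔ a ∈ Ideal.span {t})) :
    ν (algebraMap A F t) = 1 := by
  have hinj : Function.Injective (algebraMap A F) := IsFractionRing.injective A F
  have halgne : ∀ a : A, a ≠ 0 → algebraMap A F a ≠ 0 := by
    intro a ha h
    exact ha (hinj (by rw [h, map_zero]))
  have hfrac : ∀ x : F, x ≠ 0 → ∃ a b : A, a ≠ 0 ∧ b ≠ 0 ∧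
      ν x = ν (algebraMap A F a) - ν (algebraMap A F b) := by
    intro x hx
    obtain ⟨a, b, hb, hab⟩ := IsFractionRing.div_surjective (A := A) x
    have hb0 : b ≠ 0 := nonZeroDivisors.ne_zero hb
    have ha0 : a ≠ 0 := by
      intro h
      subst h
      rw [map_zero, zero_div] at hab
      exact hx hab.symm
    refine ⟨a, b, ha0, hb0, ?_⟩
    have h1 : x * algebraMap A F b = algebraMap A F a := by
      rw [← hab, div_mul_cancel₀]
      exact halgne b hb0
    have h2 := hν.map_mul x (algebraMap A F b) hx (halgne b hb0)
    rw [h1] at h2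
    omega
  -- t ≠ 0
  have ht0 : t ≠ 0 := by
    intro h
    have hz : ∀ a : A, a ≠ 0 → ν (algebraMap A F a) = 0 := by
      intro a ha
      have h1 := hnn a ha
      have h2 := hpos a ha
      rw [h, Ideal.span_singleton_eq_bot.mpr rfl] at h2
      have h3 : ¬ (0 < ν (algebraMap A F a)) := fun hlt => by
        have := h2.mp hlt
        simp only [Ideal.mem_bot] at this
        exact ha this
      omega
    obtain ⟨y, hy0, hy1⟩ := hν.surj 1
    obtain ⟨a, b, ha, hb, hab⟩ := hfrac y hy0
    rw [hz a ha, hz b hb] at hab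
    omega
  set e := ν (algebraMap A F t) with he
  have hepos : 0 < e := (hpos t ht0).mpr (Ideal.mem_span_singleton_self t)
  have hmulA : ∀ a : A, a ≠ 0 → ∃ m : ℤ, ν (algebraMap A F a) = m * e := by
    intro a ha
    obtain ⟨j, u, rfl, hu⟩ := factor_out t htm ha
    have hu0 : u ≠ 0 := by
      intro h
      rw [h, mul_zero] at ha
      exact ha rfl
    have hνu : ν (algebraMap A F u) = 0 := by
      have h1 := hnn u hu0
      have h2 : ¬ (0 < ν (algebraMap A F u)) := fun hlt => hu ((hpos u hu0).mp hlt)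
      omega
    have hνt : ν (algebraMap A F (t ^ j)) = (j : ℤ) * e := by
      rw [map_pow, ← zpow_natCast, hν.zpow (halgne t ht0)]
    refine ⟨(j : ℤ), ?_⟩
    rw [map_mul, hν.map_mul _ _ (by rw [map_pow]; exact pow_ne_zero _ (halgne t ht0))
      (halgne u hu0), hνt, hνu, add_zero]
  obtain ⟨y, hy0, hy1⟩ := hν.surj 1
  obtain ⟨a, b, ha, hb, hab⟩ := hfrac y hy0
  obtain ⟨m₁, hm₁⟩ := hmulA a ha
  obtain ⟨m₂, hm₂⟩ := hmulA b hb
  have h1 : 1 = (m₁ - m₂) * e := by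
    rw [sub_mul]
    omega
  have hdvd : e ∣ 1 := Dvd.intro_left _ h1.symm
  have := Int.le_of_dvd one_pos hdvd
  omega

/-- Powers of π₂ do not lie in (π₁), given the existence of a chain witnessing dim ≥ 2. -/
theorem pow_not_mem_span {R : Type u} [CommRing R] [IsDomain R] [IsNoetherianRing R]
    [IsLocalRing R] (π₁ π₂ : R) (hm : Ideal.span {π₁, π₂} = maximalIdeal R)
    (q : Ideal R) (hq : q.IsPrime) (hq0 : q ≠ ⊥) (hqm : q < maximalIdeal R) :
    ∀ n : ℕ, π₂ ^ n ∉ Ideal.span {π₁} :=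
  fun n h => haupt_contradiction π₁ π₂ hm q hq hq0 hqm n h

/-- (π₁) is a prime ideal. -/
theorem span_prime {R : Type u} [CommRing R] [IsDomain R] [IsNoetherianRing R]
    [IsLocalRing R] (π₁ π₂ : R) (hm : Ideal.span {π₁, π₂} = maximalIdeal R)
    (hpownm : ∀ n : ℕ, π₂ ^ n ∉ Ideal.span {π₁}) :
    (Ideal.span {π₁} : Ideal R).IsPrime := by
  classical
  have hπ₁m : π₁ ∈ maximalIdeal R := by
    rw [← hm]; exact Ideal.subset_span (by simp)
  have hmne : maximalIdeal R ≠ ⊤ := Ideal.IsPrime.ne_top'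
  rw [← Ideal.Quotient.isDomain_iff_prime]
  set S := R ⧸ Ideal.span {π₁} with hS
  have hspanne : Ideal.span {π₁} ≠ ⊤ := fun h =>
    (mem_nonunits_iff.mp ((mem_maximalIdeal π₁).mp hπ₁m)) (Ideal.span_singleton_eq_top.mp h)
  haveI : Nontrivial S := Ideal.Quotient.nontrivial_iff.mpr hspanne
  haveI : IsLocalRing S := IsLocalRing.of_surjective' _ Ideal.Quotient.mk_surjective
  set mk := Ideal.Quotient.mk (Ideal.span {π₁}) with hmk
  set tb : S := mk π₂ with htb
  have hms : Ideal.map mk (maximalIdeal R) = Ideal.span {tb} := by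
    rw [← hm, Ideal.map_span]
    have h1 : (⇑mk) '' {π₁, π₂} = {0, tb} := by
      rw [Set.image_pair]
      congr 1
      rw [Ideal.Quotient.eq_zero_iff_mem]
      exact Ideal.subset_span (by simp)
    rw [h1]
    exact Submodule.span_insert_zero
  have hcm : Ideal.comap mk (Ideal.map mk (maximalIdeal R)) = maximalIdeal R := by
    rw [Ideal.comap_map_of_surjective mk Ideal.Quotient.mk_surjective]
    have h2 : Ideal.comap mk ⊥ = Ideal.span {π₁} := by
      rw [← RingHom.ker_eq_comap_bot]; exact Ideal.mk_ker
    rw [h2]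
    exact sup_eq_left.mpr (by rw [Ideal.span_le]; simpa using hπ₁m)
  have hUnit : ∀ s : S, s ∉ Ideal.span {tb} → IsUnit s := by
    intro s hs
    obtain ⟨x, rfl⟩ := Ideal.Quotient.mk_surjective s
    by_cases hx : IsUnit x
    · exact hx.map mk
    · exact absurd (by rw [← hms]; exact Ideal.mem_map_of_mem mk hx) hs
  have htbm : tb ∈ maximalIdeal S := by
    by_contra h
    have h1 : IsUnit tb := not_not.mp (fun h2 => h h2)
    have h2 : Ideal.span {tb} = ⊤ := Ideal.span_singleton_eq_top.mpr h1
    rw [← hms] at h2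
    have h3 := hcm
    rw [h2, Ideal.comap_top] at h3
    exact hmne h3.symm
  have htbpow : ∀ j : ℕ, tb ^ j ≠ 0 := by
    intro j h
    rw [htb, ← map_pow, Ideal.Quotient.eq_zero_iff_mem] at h
    exact hpownm j h
  haveI : NoZeroDivisors S := by
    constructor
    intro a b hab
    by_contra hcon
    push_neg at hcon
    obtain ⟨ha, hb⟩ := hcon
    obtain ⟨e, u, rfl, hu⟩ := factor_out tb htbm ha
    obtain ⟨f, v, rfl, hv⟩ := factor_out tb htbm hb
    obtain ⟨w, hw⟩ := hUnit u hu
    obtain ⟨w', hw'⟩ := hUnit v hv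
    have h1 : tb ^ (e + f) = 0 := by
      have h2 : tb ^ (e + f) = (tb ^ e * u) * (tb ^ f * v) * (↑w⁻¹ * ↑w'⁻¹) := by
        rw [← hw, ← hw']
        have h3 : (tb ^ e * ↑w) * (tb ^ f * ↑w') * (↑w⁻¹ * ↑w'⁻¹) =
            (tb ^ e * tb ^ f) * ((↑w * ↑w⁻¹ : S) * ((↑w' : S) * ↑w'⁻¹)) := by ring
        rw [h3, Units.mul_inv, Units.mul_inv, mul_one, mul_one, ← pow_add]
      rw [h2, hab, zero_mul]
    exact htbpow (e + f) h1
  exact NoZeroDivisors.to_isDomain S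

noncomputable section Glue

open IsLocalRing

universe v

theorem map_max_quot {R : Type v} [CommRing R] [IsLocalRing R] (π₁ π₂ : R)
    (hm : Ideal.span {π₁, π₂} = maximalIdeal R) :
    Ideal.map (Ideal.Quotient.mk (Ideal.span {π₁})) (maximalIdeal R) =
      Ideal.span {Ideal.Quotient.mk (Ideal.span {π₁}) π₂} := by
  rw [← hm, Ideal.map_span]
  have h1 : (⇑(Ideal.Quotient.mk (Ideal.span {π₁}))) '' {π₁, π₂} =
      {0, Ideal.Quotient.mk (Ideal.span {π₁}) π₂} := by
    rw [Set.image_pair]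
    congr 1
    rw [Ideal.Quotient.eq_zero_iff_mem]
    exact Ideal.subset_span (by simp)
  rw [h1]
  exact Submodule.span_insert_zero

variable {R : Type u} [CommRing R] [IsDomain R] [IsLocalRing R] [IsNoetherianRing R]

theorem quotient_facts (p : RegPrimes R) (t : R)
    (hmap : Ideal.map (Ideal.Quotient.mk p.1) (maximalIdeal R) =
      Ideal.span {Ideal.Quotient.mk p.1 t})
    (ν : ResFieldP p → ℤ) (hν : IsNuBar p ν) :
    ν (algebraMap (R ⧸ p.1) (FractionRing (R ⧸ p.1)) (Ideal.Quotient.mk p.1 t)) = 1 := by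
  classical
  haveI hprime : p.1.IsPrime := p.2.1.1
  have hne : p.1 ≠ ⊤ := hprime.ne_top
  haveI : Nontrivial (R ⧸ p.1) := Ideal.Quotient.nontrivial_iff.mpr hne
  haveI : IsLocalRing (R ⧸ p.1) := IsLocalRing.of_surjective' _ Ideal.Quotient.mk_surjective
  set mk := Ideal.Quotient.mk p.1 with hmk
  have hple : p.1 ≤ maximalIdeal R := le_maximalIdeal hne
  have hcm : Ideal.comap mk (Ideal.map mk (maximalIdeal R)) = maximalIdeal R := by
    rw [Ideal.comap_map_of_surjective mk Ideal.Quotient.mk_surjective]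
    have h2 : Ideal.comap mk ⊥ = p.1 := by
      rw [← RingHom.ker_eq_comap_bot]; exact Ideal.mk_ker
    rw [h2]
    exact sup_eq_left.mpr hple
  have hmm : ∀ x : R, x ∈ maximalIdeal R ↔ mk x ∈ Ideal.span {mk t} := by
    intro x
    constructor
    · intro h; rw [← hmap]; exact Ideal.mem_map_of_mem mk h
    · intro h
      rw [← hcm, Ideal.mem_comap, hmap]
      exact h
  have htm : mk t ∈ maximalIdeal (R ⧸ p.1) := by
    by_contra h
    rw [mem_maximalIdeal, mem_nonunits_iff, not_not] at h
    have h2 : Ideal.span {mk t} = ⊤ := Ideal.span_singleton_eq_top.mpr h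
    rw [← hmap] at h2
    have h3 := hcm
    rw [h2, Ideal.comap_top] at h3
    exact Ideal.IsPrime.ne_top' h3.symm
  letI : Algebra (R ⧸ p.1) (ResFieldP p) := inferInstanceAs (Algebra (R ⧸ p.1) (FractionRing (R ⧸ p.1)))
  haveI : IsFractionRing (R ⧸ p.1) (ResFieldP p) := inferInstanceAs (IsFractionRing (R ⧸ p.1) (FractionRing (R ⧸ p.1)))
  refine ord_lemma (A := R ⧸ p.1) (F := ResFieldP p) ν hν.1 (mk t) htm hν.2.1 ?_
  intro a ha
  obtain ⟨x, rfl⟩ := Ideal.Quotient.mk_surjective a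
  constructor
  · intro hlt
    exact (hmm x).mp ((hν.2.2 x ha).mpr hlt)
  · intro hmem
    exact (hν.2.2 x ha).mp ((hmm x).mpr hmem)

theorem nubar_unit (p : RegPrimes R) (ν : ResFieldP p → ℤ) (hν : IsNuBar p ν)
    (x : R) (hx : Ideal.Quotient.mk p.1 x ≠ 0) (hxm : x ∉ maximalIdeal R) :
    ν (algebraMap (R ⧸ p.1) (FractionRing (R ⧸ p.1)) (Ideal.Quotient.mk p.1 x)) = 0 := by
  have h1 := hν.2.1 _ hx
  have h2 : ¬ (0 < ν (algebraMap (R ⧸ p.1) (FractionRing (R ⧸ p.1))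
      (Ideal.Quotient.mk p.1 x))) := fun h => hxm ((hν.2.2 x hx).mpr h)
  omega

theorem resbar_const {k : Type u} [Field k] [Algebra k R] (p : RegPrimes R)
    (ν : ResFieldP p → ℤ) (hν : IsNuBar p ν)
    (res : ResFieldP p → k) (hres : IsResBar p ν res)
    (x : R) (c : k) (hc : x - algebraMap k R c ∈ maximalIdeal R) :
    res (algebraMap (R ⧸ p.1) (FractionRing (R ⧸ p.1)) (Ideal.Quotient.mk p.1 x)) = c := by
  set mk := Ideal.Quotient.mk p.1 with hmk
  set algκ := algebraMap (R ⧸ p.1) (FractionRing (R ⧸ p.1)) with halgκ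
  set d := x - algebraMap k R c with hd
  have hx : x = algebraMap k R c + d := by rw [hd]; ring
  have hres0 : res 0 = 0 := (hres.1.zero_iff 0 (Or.inl rfl)).mpr (Or.inl rfl)
  have hsplit : algκ (mk x) = algκ (mk (algebraMap k R c)) + algκ (mk d) := by
    rw [hx, map_add, map_add]
  have hcondA : algκ (mk (algebraMap k R c)) = 0 ∨ 0 ≤ ν (algκ (mk (algebraMap k R c))) := by
    by_cases h : mk (algebraMap k R c) = 0
    · left; rw [h, map_zero]
    · right; exact hν.2.1 _ h
  have hcondB : algκ (mk d) = 0 ∨ 0 ≤ ν (algκ (mk d)) := by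
    by_cases h : mk d = 0
    · left; rw [h, map_zero]
    · right; exact hν.2.1 _ h
  have hresB : res (algκ (mk d)) = 0 := by
    by_cases h : mk d = 0
    · rw [h, map_zero]; exact hres0
    · have hpos : 0 < ν (algκ (mk d)) := (hν.2.2 d h).mp hc
      exact (hres.1.zero_iff _ (Or.inr (le_of_lt hpos))).mpr (Or.inr hpos)
  rw [hsplit]
  refine (hres.1.map_add _ _ hcondA hcondB).trans ?_
  rw [hresB, add_zero]
  exact hres.2 c

theorem val_expr {L : Type u} [Field L] (ν : L → ℤ) (hν : IsDVal ν) (x y z : L)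
    (hx : x ≠ 0) (hy : y ≠ 0) (hz : z ≠ 0) (hνx : ν x = 0) (hνy : ν y = 0) (hνz : ν z = 0)
    (a b : ℤ) : x ^ a * y ^ b * z ≠ 0 ∧ ν (x ^ a * y ^ b * z) = 0 := by
  have h1 : x ^ a ≠ 0 := zpow_ne_zero _ hx
  have h2 : y ^ b ≠ 0 := zpow_ne_zero _ hy
  refine ⟨mul_ne_zero (mul_ne_zero h1 h2) hz, ?_⟩
  rw [hν.map_mul _ _ (mul_ne_zero h1 h2) hz, hν.map_mul _ _ h1 h2, hν.zpow hx, hν.zpow hy,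
    hνx, hνy, hνz]
  ring

end Glue


open IsLocalRing
/-- Parshin reciprocity for strictly regular elements of `Λ⁴ L^×`
over a two-dimensional regular local ring. -/
theorem statement_10 (k R L : Type u) [Field k] [IsAlgClosed k] [CharZero k]
    [CommRing R] [IsDomain R] [IsLocalRing R] [IsNoetherianRing R] [Algebra k R]
    [Field L] [Algebra R L] [IsFractionRing R L]
    (hdim : ringKrullDim R = 2)
    (hresk : ∀ x : R, ∃ c : k, x - algebraMap k R c ∈ IsLocalRing.maximalIdeal R)
    (π₁ π₂ : R) (hπ : Ideal.span {π₁, π₂} = IsLocalRing.maximalIdeal R)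
    (νp : ∀ p : RegPrimes R, L → ℤ) (hνp : ∀ p, IsNuPrime p.1 (νp p))
    (resp : ∀ p : RegPrimes R, L → ResFieldP p) (hresp : ∀ p, IsResPrime p (νp p) (resp p))
    (νb : ∀ p : RegPrimes R, ResFieldP p → ℤ) (hνb : ∀ p, IsNuBar p (νb p))
    (resb : ∀ p : RegPrimes R, ResFieldP p → k) (hresb : ∀ p, IsResBar p (νb p) (resb p))
    (D : ∀ p : RegPrimes R, ⋀[ℚ]^4 (UnitsQ L) →ₗ[ℚ] ⋀[ℚ]^3 (UnitsQ (ResFieldP p)))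
    (hD : ∀ p, IsTame (νp p) (resp p) 3 (D p))
    (D' : ∀ p : RegPrimes R, ⋀[ℚ]^3 (UnitsQ (ResFieldP p)) →ₗ[ℚ] ⋀[ℚ]^2 (UnitsQ k))
    (hD' : ∀ p, IsTame (νb p) (resb p) 2 (D' p))
    (aa bb : Fin 4 → ℤ) (ξ : Fin 4 → Rˣ)
    (b : ⋀[ℚ]^4 (UnitsQ L))
    (hb : b = wedgeF 4 (fun i => (algebraMap R L π₁) ^ (aa i) *
        (algebraMap R L π₂) ^ (bb i) * algebraMap R L (ξ i : R))) :
    {p : RegPrimes R | D' p (D p b) ≠ 0}.Finite ∧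
    ∑ᶠ p : RegPrimes R, D' p (D p b) = 0 := by
  classical
  -- a chain of primes witnessing dimension ≥ 2
  have hchain : ∃ q : Ideal R, q.IsPrime ∧ q ≠ ⊥ ∧ q < maximalIdeal R := by
    have hser : ∃ p : LTSeries (PrimeSpectrum R), 2 ≤ p.length := by
      by_contra h
      push_neg at h
      have hle : ringKrullDim R ≤ 1 := by
        rw [ringKrullDim, Order.krullDim]
        refine iSup_le fun p => ?_
        have h2 : p.length ≤ 1 := Nat.lt_succ_iff.mp (h p)
        exact_mod_cast h2
      rw [hdim] at hle
      norm_num at hle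
    obtain ⟨p, hp⟩ := hser
    have h01 : p ⟨0, by omega⟩ < p ⟨1, by omega⟩ := p.strictMono (by rw [Fin.mk_lt_mk]; omega)
    have h12 : p ⟨1, by omega⟩ < p ⟨2, by omega⟩ := p.strictMono (by rw [Fin.mk_lt_mk]; omega)
    refine ⟨(p ⟨1, by omega⟩).asIdeal, (p ⟨1, by omega⟩).2, ?_, ?_⟩
    · intro hbot
      have h2 : (p ⟨0, by omega⟩).asIdeal < (p ⟨1, by omega⟩).asIdeal :=
        (PrimeSpectrum.asIdeal_lt_asIdeal _ _).mpr h01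
      rw [hbot] at h2
      exact not_lt_bot h2
    · calc (p ⟨1, by omega⟩).asIdeal < (p ⟨2, by omega⟩).asIdeal :=
            (PrimeSpectrum.asIdeal_lt_asIdeal _ _).mpr h12
        _ ≤ maximalIdeal R := le_maximalIdeal (p ⟨2, by omega⟩).2.ne_top
  obtain ⟨q, hqprime, hq0, hqm⟩ := hchain
  have hmne : maximalIdeal R ≠ ⊤ := Ideal.IsPrime.ne_top'
  have hnm12 : ∀ n : ℕ, π₂ ^ n ∉ Ideal.span {π₁} := pow_not_mem_span π₁ π₂ hπ q hqprime hq0 hqm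
  have hπ' : Ideal.span {π₂, π₁} = maximalIdeal R := by rw [Ideal.span_pair_comm]; exact hπ
  have hnm21 : ∀ n : ℕ, π₁ ^ n ∉ Ideal.span {π₂} := pow_not_mem_span π₂ π₁ hπ' q hqprime hq0 hqm
  have hπ₂notin : π₂ ∉ Ideal.span {π₁} := by have := hnm12 1; rwa [pow_one] at this
  have hπ₁notin : π₁ ∉ Ideal.span {π₂} := by have := hnm21 1; rwa [pow_one] at this
  have hπ₁0 : π₁ ≠ 0 := fun h => hπ₁notin (by rw [h]; exact Submodule.zero_mem _)
  have hπ₂0 : π₂ ≠ 0 := fun h => hπ₂notin (by rw [h]; exact Submodule.zero_mem _)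
  have hπ₁m : π₁ ∈ maximalIdeal R := by rw [← hπ]; exact Ideal.subset_span (by simp)
  have hπ₂m : π₂ ∈ maximalIdeal R := by rw [← hπ]; exact Ideal.subset_span (by simp)
  have hp1prime : (Ideal.span {π₁} : Ideal R).IsPrime := span_prime π₁ π₂ hπ hnm12
  have hp2prime : (Ideal.span {π₂} : Ideal R).IsPrime := span_prime π₂ π₁ hπ' hnm21
  -- the two regular primes
  have hHt : ∀ π : R, π ∈ maximalIdeal R → π ≠ 0 → (Ideal.span {π} : Ideal R).IsPrime →
      IsHeightOne (Ideal.span {π}) := by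
    intro π hm h0 hpr
    refine ⟨hpr, fun h => h0 (Ideal.span_singleton_eq_bot.mp h), ?_⟩
    intro qq hqq hlt
    by_contra hne
    obtain ⟨x, hxq, hx0⟩ := (Submodule.ne_bot_iff qq).mp hne
    obtain ⟨e, u, rfl, hu⟩ := factor_out π hm hx0
    have huq : u ∉ qq := fun h => hu (le_of_lt hlt h)
    have hπe : π ^ e ∈ qq := (hqq.mem_or_mem hxq).resolve_right huq
    have hπq : π ∈ qq := hqq.mem_of_pow_mem e hπe
    exact absurd ((Ideal.span_singleton_le_iff_mem _).mpr hπq) (not_le_of_gt hlt)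
  set p₁ : RegPrimes R := ⟨Ideal.span {π₁}, hHt π₁ hπ₁m hπ₁0 hp1prime,
    ⟨π₂, map_max_quot π₁ π₂ hπ⟩⟩ with hp₁
  set p₂ : RegPrimes R := ⟨Ideal.span {π₂}, hHt π₂ hπ₂m hπ₂0 hp2prime,
    ⟨π₁, map_max_quot π₂ π₁ hπ'⟩⟩ with hp₂
  have hp12 : p₁ ≠ p₂ := by
    intro h
    have h2 : p₁.1 = p₂.1 := congrArg Subtype.val h
    apply hπ₂notin
    have h3 : π₂ ∈ p₂.1 := Ideal.mem_span_singleton_self π₂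
    rw [← h2] at h3
    exact h3
  have huniq1 : ∀ p : RegPrimes R, π₁ ∈ p.1 → p = p₁ := by
    intro p hmem
    have hle : Ideal.span {π₁} ≤ p.1 := (Ideal.span_singleton_le_iff_mem _).mpr hmem
    rcases hle.lt_or_eq with hlt | heq
    · exact absurd (p.2.1.2.2 _ hp1prime hlt)
        (fun h => hπ₁0 (Ideal.span_singleton_eq_bot.mp h))
    · exact Subtype.ext heq.symm
  have huniq2 : ∀ p : RegPrimes R, π₂ ∈ p.1 → p = p₂ := by
    intro p hmem
    have hle : Ideal.span {π₂} ≤ p.1 := (Ideal.span_singleton_le_iff_mem _).mpr hmem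
    rcases hle.lt_or_eq with hlt | heq
    · exact absurd (p.2.1.2.2 _ hp2prime hlt)
        (fun h => hπ₂0 (Ideal.span_singleton_eq_bot.mp h))
    · exact Subtype.ext heq.symm
  -- nonzero images in L
  have hinj : Function.Injective (algebraMap R L) := IsFractionRing.injective R L
  have halgne : ∀ x : R, x ≠ 0 → algebraMap R L x ≠ 0 := by
    intro x hx h
    exact hx (hinj (by rw [h, map_zero]))
  have hξ0R : ∀ i, (ξ i : R) ≠ 0 := fun i => (ξ i).ne_zero
  have hξm : ∀ i, (ξ i : R) ∉ maximalIdeal R :=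
    fun i h => hmne (Ideal.eq_top_of_isUnit_mem _ h (ξ i).isUnit)
  have hξp1 : ∀ i, (ξ i : R) ∉ Ideal.span {π₁} :=
    fun i h => hξm i (((Ideal.span_singleton_le_iff_mem _).mpr hπ₁m) h)
  have hξp2 : ∀ i, (ξ i : R) ∉ Ideal.span {π₂} :=
    fun i h => hξm i (((Ideal.span_singleton_le_iff_mem _).mpr hπ₂m) h)
  -- residue constants
  have hcchoice : ∀ i, ∃ c : k, (ξ i : R) - algebraMap k R c ∈ maximalIdeal R :=
    fun i => hresk (ξ i : R)
  set c : Fin 4 → k := fun i => Classical.choose (hcchoice i) with hc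
  have hcspec : ∀ i, (ξ i : R) - algebraMap k R (c i) ∈ maximalIdeal R :=
    fun i => Classical.choose_spec (hcchoice i)
  -- vanishing away from p₁, p₂
  have hvanish : ∀ p : RegPrimes R, p ≠ p₁ → p ≠ p₂ → D' p (D p b) = 0 := by
    intro p hne1 hne2
    have hπ₁p : π₁ ∉ p.1 := fun h => hne1 (huniq1 p h)
    have hπ₂p : π₂ ∉ p.1 := fun h => hne2 (huniq2 p h)
    have hξp : ∀ i, (ξ i : R) ∉ p.1 := by
      intro i h
      have hple : p.1 ≤ maximalIdeal R := le_maximalIdeal p.2.1.1.ne_top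
      exact hξm i (hple h)
    have hdv := (hνp p).1
    have hnn := (hνp p).2.1
    have hiff := (hνp p).2.2
    have hval : ∀ x : R, x ≠ 0 → x ∉ p.1 → νp p (algebraMap R L x) = 0 := by
      intro x hx hxp
      have h1 := hnn x hx
      have h2 : ¬ (0 < νp p (algebraMap R L x)) := fun h => hxp ((hiff x hx).mpr h)
      omega
    have hf : ∀ i, (algebraMap R L π₁) ^ (aa i) * (algebraMap R L π₂) ^ (bb i) *
        algebraMap R L (ξ i : R) ≠ 0 ∧
        νp p ((algebraMap R L π₁) ^ (aa i) * (algebraMap R L π₂) ^ (bb i) *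
          algebraMap R L (ξ i : R)) = 0 := by
      intro i
      exact val_expr (νp p) hdv _ _ _ (halgne π₁ hπ₁0) (halgne π₂ hπ₂0) (halgne _ (hξ0R i))
        (hval π₁ hπ₁0 hπ₁p) (hval π₂ hπ₂0 hπ₂p) (hval _ (hξ0R i) (hξp i)) (aa i) (bb i)
    rw [hb, tame_units hdv (hD p) _ hf, map_zero]
  -- valuation facts at p₁
  have hdv1 := (hνp p₁).1
  have h1nn := (hνp p₁).2.1
  have h1iff := (hνp p₁).2.2
  have hval1 : ∀ x : R, x ≠ 0 → x ∉ Ideal.span {π₁} → νp p₁ (algebraMap R L x) = 0 := by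
    intro x hx hxp
    have h1 := h1nn x hx
    have h2 : ¬ (0 < νp p₁ (algebraMap R L x)) := fun h => hxp ((h1iff x hx).mpr h)
    omega
  have hv11 : νp p₁ (algebraMap R L π₁) = 1 :=
    ord_lemma (A := R) (F := L) (νp p₁) hdv1 π₁ hπ₁m h1nn (fun a ha => (h1iff a ha).symm)
  have hv12 : νp p₁ (algebraMap R L π₂) = 0 := hval1 π₂ hπ₂0 hπ₂notin
  have hv1ξ : ∀ i, νp p₁ (algebraMap R L (ξ i : R)) = 0 :=
    fun i => hval1 _ (hξ0R i) (hξp1 i)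
  -- valuation facts at p₂
  have hdv2 := (hνp p₂).1
  have h2nn := (hνp p₂).2.1
  have h2iff := (hνp p₂).2.2
  have hval2 : ∀ x : R, x ≠ 0 → x ∉ Ideal.span {π₂} → νp p₂ (algebraMap R L x) = 0 := by
    intro x hx hxp
    have h1 := h2nn x hx
    have h2 : ¬ (0 < νp p₂ (algebraMap R L x)) := fun h => hxp ((h2iff x hx).mpr h)
    omega
  have hv22 : νp p₂ (algebraMap R L π₂) = 1 :=
    ord_lemma (A := R) (F := L) (νp p₂) hdv2 π₂ hπ₂m h2nn (fun a ha => (h2iff a ha).symm)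
  have hv21 : νp p₂ (algebraMap R L π₁) = 0 := hval2 π₁ hπ₁0 hπ₁notin
  have hv2ξ : ∀ i, νp p₂ (algebraMap R L (ξ i : R)) = 0 :=
    fun i => hval2 _ (hξ0R i) (hξp2 i)
  -- residue-field facts at p₁
  have hr1 := (hresp p₁).2
  have hmkξ1 : ∀ i, Ideal.Quotient.mk p₁.1 (ξ i : R) ≠ 0 := by
    intro i h
    rw [Ideal.Quotient.eq_zero_iff_mem] at h
    exact hξp1 i h
  have hmkπ₂1 : Ideal.Quotient.mk p₁.1 π₂ ≠ 0 := by
    intro h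
    rw [Ideal.Quotient.eq_zero_iff_mem] at h
    exact hπ₂notin h
  have hv1'2 : νb p₁ (resp p₁ (algebraMap R L π₂)) = 1 := by
    rw [hr1 π₂]
    exact quotient_facts p₁ π₂ (map_max_quot π₁ π₂ hπ) (νb p₁) (hνb p₁)
  have hv1'ξ : ∀ i, νb p₁ (resp p₁ (algebraMap R L (ξ i : R))) = 0 := by
    intro i
    rw [hr1 (ξ i : R)]
    exact nubar_unit p₁ (νb p₁) (hνb p₁) _ (hmkξ1 i) (hξm i)
  have hc1 : ∀ i, resb p₁ (resp p₁ (algebraMap R L (ξ i : R))) = c i := by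
    intro i
    rw [hr1 (ξ i : R)]
    exact resbar_const p₁ (νb p₁) (hνb p₁) (resb p₁) (hresb p₁) _ _ (hcspec i)
  -- residue-field facts at p₂
  have hr2 := (hresp p₂).2
  have hmkξ2 : ∀ i, Ideal.Quotient.mk p₂.1 (ξ i : R) ≠ 0 := by
    intro i h
    rw [Ideal.Quotient.eq_zero_iff_mem] at h
    exact hξp2 i h
  have hv2'1 : νb p₂ (resp p₂ (algebraMap R L π₁)) = 1 := by
    rw [hr2 π₁]
    exact quotient_facts p₂ π₁ (map_max_quot π₂ π₁ hπ') (νb p₂) (hνb p₂)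
  have hv2'ξ : ∀ i, νb p₂ (resp p₂ (algebraMap R L (ξ i : R))) = 0 := by
    intro i
    rw [hr2 (ξ i : R)]
    exact nubar_unit p₂ (νb p₂) (hνb p₂) _ (hmkξ2 i) (hξm i)
  have hc2 : ∀ i, resb p₂ (resp p₂ (algebraMap R L (ξ i : R))) = c i := by
    intro i
    rw [hr2 (ξ i : R)]
    exact resbar_const p₂ (νb p₂) (hνb p₂) (resb p₂) (hresb p₂) _ _ (hcspec i)
  -- the main cancellation
  have hcancel : D' p₁ (D p₁ b) + D' p₂ (D p₂ b) = 0 := by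
    rw [hb]
    exact main_cancel (νp p₁) (νp p₂) hdv1 hdv2 (resp p₁) (resp p₂) (hresp p₁).1 (hresp p₂).1
      (νb p₁) (νb p₂) (hνb p₁).1 (hνb p₂).1 (resb p₁) (resb p₂)
      (D p₁) (hD p₁) (D p₂) (hD p₂) (D' p₁) (hD' p₁) (D' p₂) (hD' p₂)
      (algebraMap R L π₁) (algebraMap R L π₂) (fun i => algebraMap R L (ξ i : R)) c
      (halgne π₁ hπ₁0) (halgne π₂ hπ₂0) (fun i => halgne _ (hξ0R i))
      hv11 hv12 hv21 hv22 hv1ξ hv2ξ hv1'2 hv2'1 hv1'ξ hv2'ξ hc1 hc2 aa bb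
  constructor
  · refine Set.Finite.subset ((Set.finite_singleton p₂).insert p₁) ?_
    intro p hp
    by_contra hnot
    simp only [Set.mem_insert_iff, Set.mem_singleton_iff] at hnot
    push_neg at hnot
    exact hp (hvanish p hnot.1 hnot.2)
  · have hsupp : Function.support (fun p : RegPrimes R => D' p (D p b)) ⊆
        (({p₁, p₂} : Finset (RegPrimes R)) : Set (RegPrimes R)) := by
      intro p hp
      simp only [Function.mem_support] at hp
      simp only [Finset.coe_insert, Finset.coe_singleton, Set.mem_insert_iff,
        Set.mem_singleton_iff]
      by_contra hnot
      push_neg at hnot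
      exact hp (hvanish p hnot.1 hnot.2)
    rw [finsum_eq_finset_sum_of_support_subset _ hsupp, Finset.sum_pair hp12]
    exact hcancel
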